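/- arXiv:1403.2749 — 7 statements merged into one kernel-verified Lean document; each statement's English description precedes it below -/
import Mathlib

section
/- Let T be an m×n real matrix with all entries in [0,1]. Then there exists an m×n matrix F with entries in {0,1} such that f_{ij} ∈ {⌊t_{ij}⌋, ⌈t_{ij}⌉} for all i,j, and: (a) for each row i and each 1 ≤ b ≤ n, |∑_{j=1}^{b}(t_{ij} - f_{ij})| < 1; (b) for each column j and each 1 ≤ b ≤ m, |∑_{i=1}^{b}(t_{ij} - f_{ij})| < 1; and (c) |∑_{i,j}(t_{ij} - f_{ij})| < 1. -/
open Finset Function Filter Topology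

namespace TwoWay

noncomputable section

def IsInt (x : ℝ) : Prop := ∃ z : ℤ, x = (z : ℝ)

lemma IsInt.add {x y : ℝ} (hx : IsInt x) (hy : IsInt y) : IsInt (x + y) := by
  obtain ⟨a, rfl⟩ := hx; obtain ⟨b, rfl⟩ := hy; exact ⟨a + b, by push_cast; ring⟩

lemma IsInt.sub {x y : ℝ} (hx : IsInt x) (hy : IsInt y) : IsInt (x - y) := by
  obtain ⟨a, rfl⟩ := hx; obtain ⟨b, rfl⟩ := hy; exact ⟨a - b, by push_cast; ring⟩

lemma isInt_zero : IsInt 0 := ⟨0, by norm_num⟩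

lemma isInt_sum {α : Type*} (s : Finset α) (f : α → ℝ) (h : ∀ a ∈ s, IsInt (f a)) :
    IsInt (∑ a ∈ s, f a) :=
  Finset.sum_induction f IsInt (fun _ _ => IsInt.add) isInt_zero h

def pre {n : ℕ} (x : Fin n → ℝ) (b : ℕ) : ℝ :=
  ∑ j ∈ Finset.univ.filter (fun j : Fin n => (j : ℕ) < b), x j

lemma pre_zero {n : ℕ} (x : Fin n → ℝ) : pre x 0 = 0 := by simp [pre]

lemma pre_top {n : ℕ} (x : Fin n → ℝ) {b : ℕ} (hb : n ≤ b) : pre x b = ∑ j, x j := by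
  unfold pre
  rw [Finset.filter_true_of_mem]
  exact fun j _ => lt_of_lt_of_le j.2 hb

lemma pre_sub_pre {n : ℕ} (x : Fin n → ℝ) {p c : ℕ} (hpc : p ≤ c) :
    pre x c - pre x p =
      ∑ j ∈ Finset.univ.filter (fun j : Fin n => p ≤ (j : ℕ) ∧ (j : ℕ) < c), x j := by
  classical
  unfold pre
  have h1 : Finset.univ.filter (fun j : Fin n => (j : ℕ) < c)
      = (Finset.univ.filter (fun j : Fin n => (j : ℕ) < p)) ∪
        (Finset.univ.filter (fun j : Fin n => p ≤ (j : ℕ) ∧ (j : ℕ) < c)) := by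
    ext j
    simp only [Finset.mem_filter, Finset.mem_union, Finset.mem_univ, true_and]
    omega
  have h2 : Disjoint (Finset.univ.filter (fun j : Fin n => (j : ℕ) < p))
      (Finset.univ.filter (fun j : Fin n => p ≤ (j : ℕ) ∧ (j : ℕ) < c)) := by
    rw [Finset.disjoint_filter]
    intro j _ hj
    simp only [not_and]
    omega
  rw [h1, Finset.sum_union h2]
  ring

open scoped Classical in
/-- the next "tight cut" strictly after `j` (w.r.t. vector `x`). -/
def nxtV {n : ℕ} (x : Fin n → ℝ) (j : Fin n) : ℕ :=
  if h : ∃ b, (j : ℕ) < b ∧ b ≤ n ∧ IsInt (pre x b) then Nat.find h else 0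

section Vec

variable {n : ℕ} {x : Fin n → ℝ}

lemma nxtV_ex (hn : IsInt (pre x n)) (j : Fin n) :
    ∃ b, (j : ℕ) < b ∧ b ≤ n ∧ IsInt (pre x b) := ⟨n, j.2, le_rfl, hn⟩

lemma nxtV_spec (hn : IsInt (pre x n)) (j : Fin n) :
    (j : ℕ) < nxtV x j ∧ nxtV x j ≤ n ∧ IsInt (pre x (nxtV x j)) := by
  classical
  rw [nxtV, dif_pos (nxtV_ex hn j)]
  exact Nat.find_spec (nxtV_ex hn j)

lemma nxtV_min' (hn : IsInt (pre x n)) (j : Fin n) {b : ℕ}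
    (h : (j : ℕ) < b ∧ b ≤ n ∧ IsInt (pre x b)) : nxtV x j ≤ b := by
  classical
  rw [nxtV, dif_pos (nxtV_ex hn j)]
  exact Nat.find_min' _ h

lemma nxtV_min (hn : IsInt (pre x n)) (j : Fin n) {b : ℕ} (h : b < nxtV x j) :
    ¬((j : ℕ) < b ∧ b ≤ n ∧ IsInt (pre x b)) := by
  classical
  rw [nxtV, dif_pos (nxtV_ex hn j)] at h
  exact Nat.find_min _ h

/-- every fractional entry has a distinct partner in the same row segment. -/
lemma partnerV (hn : IsInt (pre x n)) (j : Fin n) (hj : ¬IsInt (x j)) :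
    ∃ j' : Fin n, j' ≠ j ∧ ¬IsInt (x j') ∧ nxtV x j' = nxtV x j := by
  classical
  obtain ⟨hjc, hcn, hcint⟩ := nxtV_spec hn j
  set c := nxtV x j with hc
  set p := Nat.findGreatest (fun b => IsInt (pre x b)) (c - 1) with hp
  have hpt : IsInt (pre x p) :=
    Nat.findGreatest_spec (P := fun b => IsInt (pre x b)) (Nat.zero_le _)
      (show IsInt (pre x 0) by rw [pre_zero]; exact isInt_zero)
  have hpc : p ≤ c - 1 := Nat.findGreatest_le _
  have hpn : p ≤ n := by omega
  have hpj : p ≤ (j : ℕ) := by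
    by_contra h
    push_neg at h
    exact nxtV_min hn j (show p < c by omega) ⟨h, hpn, hpt⟩
  have hmax : ∀ b, p < b → b < c → ¬IsInt (pre x b) := by
    intro b h1 h2
    exact Nat.findGreatest_is_greatest h1 (by omega)
  set S := Finset.univ.filter (fun j' : Fin n => p ≤ (j' : ℕ) ∧ (j' : ℕ) < c) with hS
  have hseg : IsInt (∑ j' ∈ S, x j') := by
    rw [← pre_sub_pre x (show p ≤ c by omega)]
    exact hcint.sub hpt
  have hjS : j ∈ S := by
    simp only [hS, Finset.mem_filter, Finset.mem_univ, true_and]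
    exact ⟨hpj, hjc⟩
  have hnxtS : ∀ j' : Fin n, j' ∈ S → nxtV x j' = c := by
    intro j' hj'
    simp only [hS, Finset.mem_filter, Finset.mem_univ, true_and] at hj'
    have h1 : nxtV x j' ≤ c := nxtV_min' hn j' ⟨hj'.2, hcn, hcint⟩
    rcases lt_or_eq_of_le h1 with h2 | h2
    · obtain ⟨hb1, hb2, hb3⟩ := nxtV_spec hn j'
      exact absurd hb3 (hmax _ (by omega) h2)
    · exact h2
  by_contra hno
  push_neg at hno
  have hintS : ∀ j' ∈ S.erase j, IsInt (x j') := by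
    intro j' hj'
    have hne : j' ≠ j := Finset.ne_of_mem_erase hj'
    by_contra hfrac
    exact absurd (hnxtS j' (Finset.mem_of_mem_erase hj')) (hno j' hne hfrac)
  apply hj
  have hsplit : ∑ j' ∈ S, x j' = x j + ∑ j' ∈ S.erase j, x j' :=
    (Finset.add_sum_erase _ _ hjS).symm
  have : x j = (∑ j' ∈ S, x j') - ∑ j' ∈ S.erase j, x j' := by rw [hsplit]; ring
  rw [this]
  exact hseg.sub (isInt_sum _ _ hintS)

open scoped Classical in
/-- key transfer: if `d` vanishes on integral entries and has zero sum on every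
`nxtV`-fiber of fractional entries, then `d` has zero prefix sums at all tight cuts. -/
lemma pre_d_zero (hn : IsInt (pre x n)) (d : Fin n → ℝ)
    (hd0 : ∀ j, IsInt (x j) → d j = 0)
    (hfib : ∀ c : ℕ,
      ∑ j ∈ Finset.univ.filter (fun j : Fin n => ¬IsInt (x j) ∧ nxtV x j = c), d j = 0)
    {b : ℕ} (hb : b ≤ n) (htight : IsInt (pre x b)) : pre d b = 0 := by
  classical
  set s := Finset.univ.filter (fun j : Fin n => (j : ℕ) < b ∧ ¬IsInt (x j)) with hs
  have h1 : pre d b = ∑ j ∈ s, d j := by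
    unfold pre
    rw [hs]
    rw [← Finset.sum_filter_add_sum_filter_not
      (Finset.univ.filter (fun j : Fin n => (j : ℕ) < b)) (fun j => ¬IsInt (x j)) d]
    have hz : ∑ j ∈ (Finset.univ.filter (fun j : Fin n => (j : ℕ) < b)).filter
        (fun j => ¬¬IsInt (x j)), d j = 0 := by
      apply Finset.sum_eq_zero
      intro j hj
      simp only [Finset.mem_filter, not_not] at hj
      exact hd0 j hj.2
    rw [hz, add_zero]
    congr 1
    rw [Finset.filter_filter]
  rw [h1]
  have hkey : ∀ j ∈ s, nxtV x j ≤ b := by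
    intro j hj
    simp only [hs, Finset.mem_filter, Finset.mem_univ, true_and] at hj
    exact nxtV_min' hn j ⟨hj.1, hb, htight⟩
  rw [← Finset.sum_fiberwise_of_maps_to
    (fun j hj => Finset.mem_image_of_mem (nxtV x) hj) d]
  apply Finset.sum_eq_zero
  intro c hc
  have hcb : c ≤ b := by
    obtain ⟨j0, hj0, rfl⟩ := Finset.mem_image.mp hc
    exact hkey j0 hj0
  have hset : s.filter (fun j => nxtV x j = c)
      = Finset.univ.filter (fun j : Fin n => ¬IsInt (x j) ∧ nxtV x j = c) := by
    ext j
    simp only [hs, Finset.mem_filter, Finset.mem_univ, true_and]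
    constructor
    · rintro ⟨⟨h1', h2'⟩, h3'⟩; exact ⟨h2', h3'⟩
    · rintro ⟨h1', h2'⟩
      have := (nxtV_spec hn j).1
      refine ⟨⟨?_, h1'⟩, h2'⟩
      omega
  rw [hset]
  exact hfib c

end Vec


lemma la_count {E κ : Type*} [Fintype E] [Fintype κ] [DecidableEq E] [DecidableEq κ]
    (g : E → κ) (hg : Surjective g)
    (hpair : ∀ e : E, ∃ e' : E, e' ≠ e ∧ g e' = g e) :
    2 * Fintype.card κ ≤ Fintype.card E := by
  have h1 : (Finset.univ : Finset E).card =
      ∑ v ∈ (Finset.univ : Finset κ), (Finset.univ.filter (fun e => g e = v)).card :=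
    Finset.card_eq_sum_card_fiberwise (fun e _ => Finset.mem_univ _)
  have h2 : ∀ v : κ, 2 ≤ (Finset.univ.filter (fun e : E => g e = v)).card := by
    intro v
    obtain ⟨e, rfl⟩ := hg v
    obtain ⟨e', hne, he'⟩ := hpair e
    have hsub : ({e', e} : Finset E) ⊆ Finset.univ.filter (fun x => g x = g e) := by
      intro x hx
      simp only [Finset.mem_insert, Finset.mem_singleton] at hx
      rcases hx with rfl | rfl <;> simp [he']
    calc 2 = ({e', e} : Finset E).card := by
            rw [Finset.card_insert_of_notMem (by simpa using hne)]; simp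
    _ ≤ _ := Finset.card_le_card hsub
  calc 2 * Fintype.card κ = ∑ _v ∈ (Finset.univ : Finset κ), 2 := by
        rw [Finset.sum_const, smul_eq_mul, mul_comm]; rfl
    _ ≤ ∑ v ∈ (Finset.univ : Finset κ), (Finset.univ.filter (fun e : E => g e = v)).card :=
        Finset.sum_le_sum (fun v _ => h2 v)
    _ = Fintype.card E := h1.symm

/-- Linear-algebraic core: a bipartite-type "graph" where every fiber of `r` and of `c`
has at least two elements admits a nonzero real edge-weighting with zero sum on every fiber. -/
lemma la_core {E R C : Type*} [Fintype E] [Fintype R] [Fintype C]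
    [DecidableEq E] [DecidableEq R] [DecidableEq C] [Nonempty E]
    (r : E → R) (c : E → C)
    (hr : ∀ e : E, ∃ e' : E, e' ≠ e ∧ r e' = r e)
    (hc : ∀ e : E, ∃ e' : E, e' ≠ e ∧ c e' = c e)
    (hR : Surjective r) (hC : Surjective c) :
    ∃ d : E → ℝ, d ≠ 0 ∧
      (∀ v : R, ∑ e ∈ Finset.univ.filter (fun e => r e = v), d e = 0) ∧
      (∀ w : C, ∑ e ∈ Finset.univ.filter (fun e => c e = w), d e = 0) := by
  have hcR := la_count r hR hr
  have hcC := la_count c hC hc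
  let φ : (E → ℝ) →ₗ[ℝ] (R → ℝ) × (C → ℝ) :=
    { toFun := fun d => (fun v => ∑ e ∈ Finset.univ.filter (fun e => r e = v), d e,
                         fun w => ∑ e ∈ Finset.univ.filter (fun e => c e = w), d e)
      map_add' := by
        intro d₁ d₂
        ext v <;> simp [Finset.sum_add_distrib]
      map_smul' := by
        intro a d
        ext v <;> simp [Finset.mul_sum] }
  let ψ : ((R → ℝ) × (C → ℝ)) →ₗ[ℝ] ℝ :=
    { toFun := fun p => (∑ v, p.1 v) - (∑ w, p.2 w)
      map_add' := by intro p q; simp [Finset.sum_add_distrib]; ring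
      map_smul' := by intro a p; simp only [Prod.smul_fst, Prod.smul_snd, Pi.smul_apply, smul_eq_mul, RingHom.id_apply, ← Finset.mul_sum]; ring }
  have hrange : LinearMap.range φ ≤ LinearMap.ker ψ := by
    rintro _ ⟨d, rfl⟩
    simp only [LinearMap.mem_ker]
    show (∑ v, ∑ e ∈ Finset.univ.filter (fun e => r e = v), d e)
      - (∑ w, ∑ e ∈ Finset.univ.filter (fun e => c e = w), d e) = 0
    rw [Finset.sum_fiberwise, Finset.sum_fiberwise, sub_self]
  have hker : LinearMap.ker φ ≠ ⊥ := by
    intro hbot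
    have hinj : Injective φ := LinearMap.ker_eq_bot.mp hbot
    let φ' : (E → ℝ) →ₗ[ℝ] LinearMap.ker ψ := φ.codRestrict (LinearMap.ker ψ)
      (fun d => hrange ⟨d, rfl⟩)
    have hinj' : Injective φ' := by
      intro a b hab
      exact hinj (congrArg Subtype.val hab)
    have hd : Module.finrank ℝ (E → ℝ) ≤ Module.finrank ℝ (LinearMap.ker ψ) :=
      LinearMap.finrank_le_finrank_of_injective hinj'
    have hψsurj : LinearMap.range ψ = ⊤ := by
      rw [LinearMap.range_eq_top]
      intro x
      obtain ⟨e0⟩ := (inferInstance : Nonempty E)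
      refine ⟨(fun v => if v = r e0 then x else 0, 0), ?_⟩
      show (∑ v, if v = r e0 then x else 0) - (∑ _w : C, (0:ℝ)) = x
      simp
    have hrk : Module.finrank ℝ (LinearMap.range ψ) = 1 := by
      rw [hψsurj, finrank_top]
      simp
    have hrn := LinearMap.finrank_range_add_finrank_ker ψ
    rw [hrk] at hrn
    have hV : Module.finrank ℝ ((R → ℝ) × (C → ℝ)) = Fintype.card R + Fintype.card C := by
      simp [Module.finrank_prod, Module.finrank_fintype_fun_eq_card]
    have hE : Module.finrank ℝ (E → ℝ) = Fintype.card E :=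
      Module.finrank_fintype_fun_eq_card ℝ
    rw [hE] at hd
    rw [hV] at hrn
    omega
  obtain ⟨d, hdker, hdne⟩ := Submodule.exists_mem_ne_zero_of_ne_bot hker
  refine ⟨d, hdne, ?_, ?_⟩
  · intro v
    exact congrFun (congrArg Prod.fst (LinearMap.mem_ker.mp hdker)) v
  · intro w
    exact congrFun (congrArg Prod.snd (LinearMap.mem_ker.mp hdker)) w


section MatrixCore

variable {m n : ℕ}

/-- feasibility region for rounding `T`. -/
def feas (T X : Fin m → Fin n → ℝ) : Prop :=
  (∀ i j, 0 ≤ X i j ∧ X i j ≤ 1) ∧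
  (∀ i j, IsInt (T i j) → X i j = T i j) ∧
  (∀ (i : Fin m) (b : ℕ), b ≤ n →
    ((⌊pre (T i) b⌋ : ℝ) ≤ pre (X i) b ∧ pre (X i) b ≤ (⌈pre (T i) b⌉ : ℝ))) ∧
  (∀ (j : Fin n) (b : ℕ), b ≤ m →
    ((⌊pre (fun i => T i j) b⌋ : ℝ) ≤ pre (fun i => X i j) b ∧
      pre (fun i => X i j) b ≤ (⌈pre (fun i => T i j) b⌉ : ℝ)))

lemma collapse {σ v : ℝ} (hσ : IsInt σ) (h1 : (⌊σ⌋ : ℝ) ≤ v) (h2 : v ≤ (⌈σ⌉ : ℝ)) :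
    v = σ := by
  obtain ⟨z, rfl⟩ := hσ
  rw [Int.floor_intCast] at h1
  rw [Int.ceil_intCast] at h2
  linarith

lemma strict_mid {σ v : ℝ} (h1 : (⌊σ⌋ : ℝ) ≤ v) (h2 : v ≤ (⌈σ⌉ : ℝ)) (h3 : ¬IsInt v) :
    (⌊σ⌋ : ℝ) < v ∧ v < (⌈σ⌉ : ℝ) :=
  ⟨h1.lt_of_ne fun h => h3 ⟨⌊σ⌋, h.symm⟩, h2.lt_of_ne fun h => h3 ⟨⌈σ⌉, h⟩⟩

lemma pre_perturb {k : ℕ} (x d : Fin k → ℝ) (ε : ℝ) (b : ℕ) :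
    pre (fun j => x j + ε * d j) b = pre x b + ε * pre d b := by
  simp [pre, Finset.sum_add_distrib, Finset.mul_sum]

lemma ev_bound {a l u : ℝ} (h1 : l < a) (h2 : a < u) (r : ℝ) :
    ∀ᶠ ε in 𝓝 (0 : ℝ), l ≤ a + ε * r ∧ a + ε * r ≤ u := by
  have hcont : Filter.Tendsto (fun ε : ℝ => a + ε * r) (𝓝 0) (𝓝 a) := by
    have : Continuous (fun ε : ℝ => a + ε * r) :=
      continuous_const.add (continuous_id.mul continuous_const)
    have h := this.tendsto 0
    simpa using h
  have e1 := hcont.eventually_const_lt h1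
  have e2 := hcont.eventually_lt_const h2
  filter_upwards [e1, e2] with ε hε1 hε2
  exact ⟨le_of_lt hε1, le_of_lt hε2⟩

lemma exists_perturb (T X : Fin m → Fin n → ℝ)
    (hrow : ∀ i, IsInt (∑ j, T i j)) (hcol : ∀ j, IsInt (∑ i, T i j))
    (hX : feas T X) (i0 : Fin m) (j0 : Fin n) (hfrac : ¬IsInt (X i0 j0)) :
    ∃ Z W : Fin m → Fin n → ℝ, feas T Z ∧ feas T W ∧ Z ≠ X ∧
      (1/2 : ℝ) • Z + (1/2 : ℝ) • W = X := by
  classical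
  obtain ⟨hXb, hXi, hXr, hXc⟩ := hX
  -- all row and column sums of X are integral
  have hXrow : ∀ i, IsInt (pre (X i) n) := by
    intro i
    have hσ : IsInt (pre (T i) n) := by rw [pre_top _ le_rfl]; exact hrow i
    have h := hXr i n le_rfl
    rw [collapse hσ h.1 h.2]
    exact hσ
  have hXcol : ∀ j, IsInt (pre (fun i => X i j) m) := by
    intro j
    have hσ : IsInt (pre (fun i => T i j) m) := by rw [pre_top _ le_rfl]; exact hcol j
    have h := hXc j m le_rfl
    rw [collapse hσ h.1 h.2]
    exact hσ
  -- the bipartite segment structure on fractional entries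
  let E := {e : Fin m × Fin n // ¬IsInt (X e.1 e.2)}
  haveI : Nonempty E := ⟨⟨(i0, j0), hfrac⟩⟩
  let rmap : E → Fin m × ℕ := fun e => (e.1.1, nxtV (X e.1.1) e.1.2)
  let cmap : E → Fin n × ℕ := fun e => (e.1.2, nxtV (fun i => X i e.1.2) e.1.1)
  let R := Set.range rmap
  let C := Set.range cmap
  let r' : E → ↥R := fun e => ⟨rmap e, Set.mem_range_self e⟩
  let c' : E → ↥C := fun e => ⟨cmap e, Set.mem_range_self e⟩
  have hrpair : ∀ e : E, ∃ e' : E, e' ≠ e ∧ r' e' = r' e := by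
    rintro ⟨⟨i, j⟩, hij⟩
    obtain ⟨j', hne, hfrac', heq⟩ := partnerV (hXrow i) j hij
    refine ⟨⟨(i, j'), hfrac'⟩, ?_, ?_⟩
    · intro h
      apply hne
      have := congrArg (fun e : E => e.1.2) h
      exact this
    · apply Subtype.ext
      show ((i : Fin m), nxtV (X i) j') = (i, nxtV (X i) j)
      rw [heq]
  have hcpair : ∀ e : E, ∃ e' : E, e' ≠ e ∧ c' e' = c' e := by
    rintro ⟨⟨i, j⟩, hij⟩
    obtain ⟨i', hne, hfrac', heq⟩ := partnerV (hXcol j) i hij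
    refine ⟨⟨(i', j), hfrac'⟩, ?_, ?_⟩
    · intro h
      apply hne
      have := congrArg (fun e : E => e.1.1) h
      exact this
    · apply Subtype.ext
      show ((j : Fin n), nxtV (fun i'' => X i'' j) i') = (j, nxtV (fun i'' => X i'' j) i)
      rw [heq]
  have hrsurj : Surjective r' := by
    rintro ⟨v, e, rfl⟩
    exact ⟨e, rfl⟩
  have hcsurj : Surjective c' := by
    rintro ⟨w, e, rfl⟩
    exact ⟨e, rfl⟩
  obtain ⟨d, hdne, hdr, hdc⟩ := la_core r' c' hrpair hcpair hrsurj hcsurj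
  -- the perturbation matrix
  let D : Fin m → Fin n → ℝ := fun i j =>
    if h : ¬IsInt (X i j) then d ⟨(i, j), h⟩ else 0
  have hD0 : ∀ i j, IsInt (X i j) → D i j = 0 := by
    intro i j h
    simp only [D, dif_neg (not_not.mpr h)]
  have hDval : ∀ (e : E), D e.1.1 e.1.2 = d e := by
    rintro ⟨⟨i, j⟩, h⟩
    simp only [D, dif_pos h]
  have hDne : ∃ i j, D i j ≠ 0 := by
    obtain ⟨e, he⟩ := Function.ne_iff.mp hdne
    exact ⟨e.1.1, e.1.2, by rw [hDval e]; simpa using he⟩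
  -- row fibers of D sum to zero
  have hrowfib : ∀ (i : Fin m) (c : ℕ),
      ∑ j ∈ Finset.univ.filter (fun j : Fin n => ¬IsInt (X i j) ∧ nxtV (X i) j = c),
        D i j = 0 := by
    intro i c
    by_cases hmem : ((i, c) : Fin m × ℕ) ∈ R
    · have h0 := hdr ⟨(i, c), hmem⟩
      rw [← h0]
      refine Finset.sum_bij'
        (fun j hj => (⟨(i, j), (Finset.mem_filter.mp hj).2.1⟩ : E))
        (fun e _ => e.1.2) ?_ ?_ ?_ ?_ ?_
      · intro j hj
        simp only [Finset.mem_filter, Finset.mem_univ, true_and]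
        apply Subtype.ext
        show rmap _ = (i, c)
        have h2 := (Finset.mem_filter.mp hj).2.2
        simp only [rmap]
        rw [h2]
      · intro e he
        simp only [Finset.mem_filter, Finset.mem_univ, true_and] at he ⊢
        have h1 : rmap e = (i, c) := congrArg Subtype.val he
        have h2 : e.1.1 = i := congrArg Prod.fst h1
        have h3 : nxtV (X e.1.1) e.1.2 = c := congrArg Prod.snd h1
        rw [← h2]
        exact ⟨e.2, h3⟩
      · intro j hj; rfl
      · intro e he
        simp only [Finset.mem_filter, Finset.mem_univ, true_and] at he
        have h1 : rmap e = (i, c) := congrArg Subtype.val he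
        have h2 : e.1.1 = i := congrArg Prod.fst h1
        apply Subtype.ext
        show ((i : Fin m), e.1.2) = e.1
        rw [← h2]
      · intro j hj
        simp only [D, dif_pos (Finset.mem_filter.mp hj).2.1]
    · apply Finset.sum_eq_zero
      intro j hj
      simp only [Finset.mem_filter, Finset.mem_univ, true_and] at hj
      exfalso
      apply hmem
      refine ⟨⟨(i, j), hj.1⟩, ?_⟩
      show ((i : Fin m), nxtV (X i) j) = (i, c)
      rw [hj.2]
  -- column fibers of D sum to zero
  have hcolfib : ∀ (j : Fin n) (c : ℕ),
      ∑ i ∈ Finset.univ.filter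
          (fun i : Fin m => ¬IsInt (X i j) ∧ nxtV (fun i' => X i' j) i = c),
        D i j = 0 := by
    intro j c
    by_cases hmem : ((j, c) : Fin n × ℕ) ∈ C
    · have h0 := hdc ⟨(j, c), hmem⟩
      rw [← h0]
      refine Finset.sum_bij'
        (fun i hi => (⟨(i, j), (Finset.mem_filter.mp hi).2.1⟩ : E))
        (fun e _ => e.1.1) ?_ ?_ ?_ ?_ ?_
      · intro i hi
        simp only [Finset.mem_filter, Finset.mem_univ, true_and]
        apply Subtype.ext
        show cmap _ = (j, c)
        have h2 := (Finset.mem_filter.mp hi).2.2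
        simp only [cmap]
        rw [h2]
      · intro e he
        simp only [Finset.mem_filter, Finset.mem_univ, true_and] at he ⊢
        have h1 : cmap e = (j, c) := congrArg Subtype.val he
        have h2 : e.1.2 = j := congrArg Prod.fst h1
        have h3 : nxtV (fun i' => X i' e.1.2) e.1.1 = c := congrArg Prod.snd h1
        rw [← h2]
        exact ⟨e.2, h3⟩
      · intro i hi; rfl
      · intro e he
        simp only [Finset.mem_filter, Finset.mem_univ, true_and] at he
        have h1 : cmap e = (j, c) := congrArg Subtype.val he
        have h2 : e.1.2 = j := congrArg Prod.fst h1
        apply Subtype.ext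
        show (e.1.1, (j : Fin n)) = e.1
        rw [← h2]
      · intro i hi
        simp only [D, dif_pos (Finset.mem_filter.mp hi).2.1]
    · apply Finset.sum_eq_zero
      intro i hi
      simp only [Finset.mem_filter, Finset.mem_univ, true_and] at hi
      exfalso
      apply hmem
      refine ⟨⟨(i, j), hi.1⟩, ?_⟩
      show ((j : Fin n), nxtV (fun i' => X i' j) i) = (j, c)
      rw [hi.2]
  -- prefix sums of D vanish at tight cuts
  have hDrow : ∀ (i : Fin m) (b : ℕ), b ≤ n → IsInt (pre (X i) b) → pre (D i) b = 0 :=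
    fun i b hb ht => pre_d_zero (hXrow i) (D i) (fun j hj => hD0 i j hj) (hrowfib i) hb ht
  have hDcol : ∀ (j : Fin n) (b : ℕ), b ≤ m → IsInt (pre (fun i => X i j) b) →
      pre (fun i => D i j) b = 0 :=
    fun j b hb ht =>
      pre_d_zero (hXcol j) (fun i => D i j) (fun i hi => hD0 i j hi) (hcolfib j) hb ht
  -- the perturbed family
  let Y : ℝ → Fin m → Fin n → ℝ := fun ε i j => X i j + ε * D i j
  have h2 : ∀ i j (ε : ℝ), IsInt (T i j) → Y ε i j = T i j := by
    intro i j ε hT'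
    have hx := hXi i j hT'
    have hXint : IsInt (X i j) := by rw [hx]; exact hT'
    simp only [Y, hD0 i j hXint, mul_zero, add_zero, hx]
  have hfeasY : ∀ᶠ ε in 𝓝 (0:ℝ), feas T (Y ε) := by
    have h1 : ∀ᶠ ε in 𝓝 (0:ℝ), ∀ i j, 0 ≤ Y ε i j ∧ Y ε i j ≤ 1 := by
      rw [Filter.eventually_all]
      intro i
      rw [Filter.eventually_all]
      intro j
      by_cases hint : IsInt (X i j)
      · apply Filter.Eventually.of_forall
        intro ε
        simp only [Y, hD0 i j hint, mul_zero, add_zero]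
        exact hXb i j
      · have h0 : 0 < X i j :=
          lt_of_le_of_ne (hXb i j).1 (fun h => hint ⟨0, by rw [← h]; norm_num⟩)
        have h1' : X i j < 1 :=
          lt_of_le_of_ne (hXb i j).2 (fun h => hint ⟨1, by rw [h]; norm_num⟩)
        exact ev_bound h0 h1' (D i j)
    have h3 : ∀ᶠ ε in 𝓝 (0:ℝ), ∀ (i : Fin m) (b : ℕ), b ≤ n →
        ((⌊pre (T i) b⌋ : ℝ) ≤ pre (Y ε i) b ∧ pre (Y ε i) b ≤ (⌈pre (T i) b⌉ : ℝ)) := by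
      rw [Filter.eventually_all]
      intro i
      have hx : ∀ᶠ ε in 𝓝 (0:ℝ), ∀ b ∈ Set.Iic n,
          ((⌊pre (T i) b⌋ : ℝ) ≤ pre (Y ε i) b ∧ pre (Y ε i) b ≤ (⌈pre (T i) b⌉ : ℝ)) := by
        rw [Filter.eventually_all_finite (Set.finite_Iic n)]
        intro b hb
        rw [Set.mem_Iic] at hb
        by_cases htight : IsInt (pre (X i) b)
        · apply Filter.Eventually.of_forall
          intro ε
          have hYX : pre (Y ε i) b = pre (X i) b := by
            show pre (fun j => X i j + ε * D i j) b = pre (X i) b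
            rw [pre_perturb, hDrow i b hb htight, mul_zero, add_zero]
          rw [hYX]
          exact hXr i b hb
        · have hs := strict_mid (hXr i b hb).1 (hXr i b hb).2 htight
          filter_upwards [ev_bound hs.1 hs.2 (pre (D i) b)] with ε hε
          have hYX : pre (Y ε i) b = pre (X i) b + ε * pre (D i) b := by
            show pre (fun j => X i j + ε * D i j) b = _
            rw [pre_perturb]
          rw [hYX]
          exact hε
      filter_upwards [hx] with ε hε b hb
      exact hε b hb
    have h4 : ∀ᶠ ε in 𝓝 (0:ℝ), ∀ (j : Fin n) (b : ℕ), b ≤ m →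
        ((⌊pre (fun i => T i j) b⌋ : ℝ) ≤ pre (fun i => Y ε i j) b ∧
          pre (fun i => Y ε i j) b ≤ (⌈pre (fun i => T i j) b⌉ : ℝ)) := by
      rw [Filter.eventually_all]
      intro j
      have hx : ∀ᶠ ε in 𝓝 (0:ℝ), ∀ b ∈ Set.Iic m,
          ((⌊pre (fun i => T i j) b⌋ : ℝ) ≤ pre (fun i => Y ε i j) b ∧
            pre (fun i => Y ε i j) b ≤ (⌈pre (fun i => T i j) b⌉ : ℝ)) := by
        rw [Filter.eventually_all_finite (Set.finite_Iic m)]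
        intro b hb
        rw [Set.mem_Iic] at hb
        by_cases htight : IsInt (pre (fun i => X i j) b)
        · apply Filter.Eventually.of_forall
          intro ε
          have hYX : pre (fun i => Y ε i j) b = pre (fun i => X i j) b := by
            show pre (fun i => X i j + ε * D i j) b = pre (fun i => X i j) b
            rw [pre_perturb, hDcol j b hb htight, mul_zero, add_zero]
          rw [hYX]
          exact hXc j b hb
        · have hs := strict_mid (hXc j b hb).1 (hXc j b hb).2 htight
          filter_upwards [ev_bound hs.1 hs.2 (pre (fun i => D i j) b)] with ε hε
          have hYX : pre (fun i => Y ε i j) b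
              = pre (fun i => X i j) b + ε * pre (fun i => D i j) b := by
            show pre (fun i => X i j + ε * D i j) b = _
            rw [pre_perturb]
          rw [hYX]
          exact hε
      filter_upwards [hx] with ε hε b hb
      exact hε b hb
    filter_upwards [h1, h3, h4] with ε he1 he3 he4
    exact ⟨he1, fun i j h => h2 i j ε h, he3, he4⟩
  have hneg : ∀ᶠ ε in 𝓝 (0:ℝ), feas T (Y (-ε)) := by
    have hcont : Filter.Tendsto (fun ε : ℝ => -ε) (𝓝 (0:ℝ)) (𝓝 (0:ℝ)) := by
      simpa using (continuous_neg (G := ℝ)).tendsto (0:ℝ)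
    exact hcont.eventually hfeasY
  have hflt := (hfeasY.and hneg).filter_mono (nhdsWithin_le_nhds (s := Set.Ioi (0:ℝ)))
  obtain ⟨ε, ⟨hY1, hY2⟩, hε⟩ := (hflt.and eventually_mem_nhdsWithin).exists
  rw [Set.mem_Ioi] at hε
  refine ⟨Y ε, Y (-ε), hY1, hY2, ?_, ?_⟩
  · intro hcontra
    obtain ⟨i, j, hD⟩ := hDne
    have hfx := congrFun (congrFun hcontra i) j
    simp only [Y] at hfx
    have hz : ε * D i j = 0 := by linarith
    rcases mul_eq_zero.mp hz with h | h
    · exact absurd h (ne_of_gt hε)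
    · exact hD h
  · funext i j
    show (1/2 : ℝ) * (Y ε i j) + (1/2 : ℝ) * (Y (-ε) i j) = X i j
    simp only [Y]
    ring

lemma feas_self (T : Fin m → Fin n → ℝ) (hT : ∀ i j, 0 ≤ T i j ∧ T i j ≤ 1) :
    feas T T :=
  ⟨hT, fun _ _ _ => rfl,
    fun i b _ => ⟨Int.floor_le _, Int.le_ceil _⟩,
    fun j b _ => ⟨Int.floor_le _, Int.le_ceil _⟩⟩

theorem core (T : Fin m → Fin n → ℝ) (hT : ∀ i j, 0 ≤ T i j ∧ T i j ≤ 1)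
    (hrow : ∀ i, IsInt (∑ j, T i j)) (hcol : ∀ j, IsInt (∑ i, T i j)) :
    ∃ F : Fin m → Fin n → ℝ, feas T F ∧ ∀ i j, F i j = 0 ∨ F i j = 1 := by
  classical
  set P : Set (Fin m → Fin n → ℝ) := {X | feas T X} with hP
  have hTP : T ∈ P := feas_self T hT
  -- continuity of coordinate and prefix functionals
  have hev : ∀ (i : Fin m) (j : Fin n), Continuous (fun X : Fin m → Fin n → ℝ => X i j) :=
    fun i j => (continuous_apply j).comp (continuous_apply i)
  have hprer : ∀ (i : Fin m) (b : ℕ),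
      Continuous (fun X : Fin m → Fin n → ℝ => pre (X i) b) := by
    intro i b
    unfold pre
    exact continuous_finset_sum _ (fun j _ => hev i j)
  have hprec : ∀ (j : Fin n) (b : ℕ),
      Continuous (fun X : Fin m → Fin n → ℝ => pre (fun i => X i j) b) := by
    intro j b
    unfold pre
    exact continuous_finset_sum _ (fun i _ => hev i j)
  -- P is closed
  have hPclosed : IsClosed P := by
    have hdecomp : P =
        (⋂ (i : Fin m) (j : Fin n),
          ({X : Fin m → Fin n → ℝ | 0 ≤ X i j ∧ X i j ≤ 1} ∩
            {X | IsInt (T i j) → X i j = T i j})) ∩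
        ((⋂ (i : Fin m) (b : ℕ),
          {X : Fin m → Fin n → ℝ | b ≤ n →
            ((⌊pre (T i) b⌋ : ℝ) ≤ pre (X i) b ∧ pre (X i) b ≤ (⌈pre (T i) b⌉ : ℝ))}) ∩
        (⋂ (j : Fin n) (b : ℕ),
          {X : Fin m → Fin n → ℝ | b ≤ m →
            ((⌊pre (fun i => T i j) b⌋ : ℝ) ≤ pre (fun i => X i j) b ∧
              pre (fun i => X i j) b ≤ (⌈pre (fun i => T i j) b⌉ : ℝ))})) := by
      ext X
      simp only [hP, Set.mem_setOf_eq, Set.mem_inter_iff, Set.mem_iInter,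
        Set.mem_setOf_eq, Set.mem_inter_iff]
      constructor
      · rintro ⟨a, b, c, d⟩
        exact ⟨fun i j => ⟨a i j, b i j⟩, fun i bb => c i bb, fun j bb => d j bb⟩
      · rintro ⟨ab, c, d⟩
        exact ⟨fun i j => (ab i j).1, fun i j => (ab i j).2, c, d⟩
    rw [hdecomp]
    apply IsClosed.inter
    · apply isClosed_iInter; intro i; apply isClosed_iInter; intro j
      apply IsClosed.inter
      · exact IsClosed.inter (isClosed_le continuous_const (hev i j))
          (isClosed_le (hev i j) continuous_const)
      · by_cases h : IsInt (T i j)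
        · have : {X : Fin m → Fin n → ℝ | IsInt (T i j) → X i j = T i j}
              = {X | X i j = T i j} := by
            ext X; simp [h]
          rw [this]
          exact isClosed_eq (hev i j) continuous_const
        · have : {X : Fin m → Fin n → ℝ | IsInt (T i j) → X i j = T i j} = Set.univ := by
            ext X; simp [h]
          rw [this]; exact isClosed_univ
    apply IsClosed.inter
    · apply isClosed_iInter; intro i; apply isClosed_iInter; intro b
      by_cases hb : b ≤ n
      · have : {X : Fin m → Fin n → ℝ | b ≤ n →
            ((⌊pre (T i) b⌋ : ℝ) ≤ pre (X i) b ∧ pre (X i) b ≤ (⌈pre (T i) b⌉ : ℝ))}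
            = {X | (⌊pre (T i) b⌋ : ℝ) ≤ pre (X i) b} ∩
              {X | pre (X i) b ≤ (⌈pre (T i) b⌉ : ℝ)} := by
          ext X; simp [hb, Set.mem_inter_iff]
        rw [this]
        exact IsClosed.inter (isClosed_le continuous_const (hprer i b))
          (isClosed_le (hprer i b) continuous_const)
      · have : {X : Fin m → Fin n → ℝ | b ≤ n →
            ((⌊pre (T i) b⌋ : ℝ) ≤ pre (X i) b ∧ pre (X i) b ≤ (⌈pre (T i) b⌉ : ℝ))}
            = Set.univ := by
          ext X; simp [hb]
        rw [this]; exact isClosed_univ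
    · apply isClosed_iInter; intro j; apply isClosed_iInter; intro b
      by_cases hb : b ≤ m
      · have : {X : Fin m → Fin n → ℝ | b ≤ m →
            ((⌊pre (fun i => T i j) b⌋ : ℝ) ≤ pre (fun i => X i j) b ∧
              pre (fun i => X i j) b ≤ (⌈pre (fun i => T i j) b⌉ : ℝ))}
            = {X | (⌊pre (fun i => T i j) b⌋ : ℝ) ≤ pre (fun i => X i j) b} ∩
              {X | pre (fun i => X i j) b ≤ (⌈pre (fun i => T i j) b⌉ : ℝ)} := by
          ext X; simp [hb, Set.mem_inter_iff]
        rw [this]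
        exact IsClosed.inter (isClosed_le continuous_const (hprec j b))
          (isClosed_le (hprec j b) continuous_const)
      · have : {X : Fin m → Fin n → ℝ | b ≤ m →
            ((⌊pre (fun i => T i j) b⌋ : ℝ) ≤ pre (fun i => X i j) b ∧
              pre (fun i => X i j) b ≤ (⌈pre (fun i => T i j) b⌉ : ℝ))}
            = Set.univ := by
          ext X; simp [hb]
        rw [this]; exact isClosed_univ
  -- P is compact
  have hK : IsCompact {X : Fin m → Fin n → ℝ | ∀ i j, 0 ≤ X i j ∧ X i j ≤ 1} := by
    have heq : {X : Fin m → Fin n → ℝ | ∀ i j, 0 ≤ X i j ∧ X i j ≤ 1} =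
        Set.pi Set.univ (fun _ : Fin m =>
          Set.pi Set.univ (fun _ : Fin n => Set.Icc (0:ℝ) 1)) := by
      ext X
      simp only [Set.mem_setOf_eq, Set.mem_univ_pi, Set.mem_Icc]
    rw [heq]
    exact isCompact_univ_pi (fun _ => isCompact_univ_pi (fun _ => isCompact_Icc))
  have hPK : P ⊆ {X : Fin m → Fin n → ℝ | ∀ i j, 0 ≤ X i j ∧ X i j ≤ 1} :=
    fun X hX => hX.1
  have hPcomp : IsCompact P := IsCompact.of_isClosed_subset hK hPclosed hPK
  -- P is convex
  have hcb : ∀ {a b l u z w : ℝ}, 0 ≤ a → 0 ≤ b → a + b = 1 →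
      (l ≤ z ∧ z ≤ u) → (l ≤ w ∧ w ≤ u) → (l ≤ a*z+b*w ∧ a*z+b*w ≤ u) := by
    intro a b l u z w ha hb hab hz hw
    constructor
    · calc l = a*l + b*l := by rw [← add_mul, hab, one_mul]
        _ ≤ a*z + b*w := add_le_add (mul_le_mul_of_nonneg_left hz.1 ha)
            (mul_le_mul_of_nonneg_left hw.1 hb)
    · calc a*z + b*w ≤ a*u + b*u := add_le_add (mul_le_mul_of_nonneg_left hz.2 ha)
            (mul_le_mul_of_nonneg_left hw.2 hb)
        _ = u := by rw [← add_mul, hab, one_mul]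
  have hconv : Convex ℝ P := by
    intro Z hZ W hW a b ha hb hab
    have hZW : ∀ i j, (a • Z + b • W) i j = a * Z i j + b * W i j := by
      intro i j; simp
    have hpre_r : ∀ (i : Fin m) (bb : ℕ),
        pre ((a • Z + b • W) i) bb = a * pre (Z i) bb + b * pre (W i) bb := by
      intro i bb
      unfold pre
      calc ∑ j ∈ Finset.univ.filter (fun j : Fin n => (j:ℕ) < bb), (a • Z + b • W) i j
          = ∑ j ∈ Finset.univ.filter (fun j : Fin n => (j:ℕ) < bb),
              (a * Z i j + b * W i j) := Finset.sum_congr rfl (fun j _ => hZW i j)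
        _ = _ := by rw [Finset.sum_add_distrib, Finset.mul_sum, Finset.mul_sum]
    have hpre_c : ∀ (j : Fin n) (bb : ℕ),
        pre (fun i => (a • Z + b • W) i j) bb
          = a * pre (fun i => Z i j) bb + b * pre (fun i => W i j) bb := by
      intro j bb
      unfold pre
      calc ∑ i ∈ Finset.univ.filter (fun i : Fin m => (i:ℕ) < bb), (a • Z + b • W) i j
          = ∑ i ∈ Finset.univ.filter (fun i : Fin m => (i:ℕ) < bb),
              (a * Z i j + b * W i j) := Finset.sum_congr rfl (fun i _ => hZW i j)
        _ = _ := by rw [Finset.sum_add_distrib, Finset.mul_sum, Finset.mul_sum]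
    refine ⟨?_, ?_, ?_, ?_⟩
    · intro i j
      rw [hZW]
      exact hcb ha hb hab (hZ.1 i j) (hW.1 i j)
    · intro i j h
      rw [hZW, hZ.2.1 i j h, hW.2.1 i j h]
      calc a * T i j + b * T i j = (a + b) * T i j := by ring
        _ = T i j := by rw [hab, one_mul]
    · intro i bb hbb
      rw [hpre_r]
      exact hcb ha hb hab (hZ.2.2.1 i bb hbb) (hW.2.2.1 i bb hbb)
    · intro j bb hbb
      rw [hpre_c]
      exact hcb ha hb hab (hZ.2.2.2 j bb hbb) (hW.2.2.2 j bb hbb)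
  -- extreme point
  obtain ⟨X, hXext⟩ := hPcomp.extremePoints_nonempty ⟨T, hTP⟩
  rw [mem_extremePoints] at hXext
  obtain ⟨hXP, hXe⟩ := hXext
  have hint : ∀ i j, IsInt (X i j) := by
    by_contra hc
    push_neg at hc
    obtain ⟨i0, j0, h0⟩ := hc
    obtain ⟨Z, W, hZ, hW, hZX, hmid⟩ := exists_perturb T X hrow hcol hXP i0 j0 h0
    have hseg : X ∈ openSegment ℝ Z W :=
      ⟨1/2, 1/2, by norm_num, by norm_num, by norm_num, hmid⟩
    exact hZX (hXe (x₁ := Z) hZ (x₂ := W) hW hseg).1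
  refine ⟨X, hXP, ?_⟩
  intro i j
  obtain ⟨z, hz⟩ := hint i j
  have h1 := hXP.1 i j
  rw [hz] at h1 ⊢
  have hz0 : (0:ℤ) ≤ z := by exact_mod_cast h1.1
  have hz1 : z ≤ 1 := by exact_mod_cast h1.2
  interval_cases z
  · left; norm_num
  · right; norm_num

end MatrixCore

section Final

lemma pre_castSucc {k : ℕ} (x : Fin (k+1) → ℝ) {b : ℕ} (hb : b ≤ k) :
    pre x b = pre (fun j : Fin k => x j.castSucc) b := by
  unfold pre
  refine Finset.sum_bij'
    (fun (j : Fin (k+1)) hj => (⟨(j : ℕ), by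
      simp only [Finset.mem_filter, Finset.mem_univ, true_and] at hj; omega⟩ : Fin k))
    (fun (j : Fin k) _ => j.castSucc) ?_ ?_ ?_ ?_ ?_
  · intro j hj
    simp only [Finset.mem_filter, Finset.mem_univ, true_and] at hj ⊢
    exact hj
  · intro j hj
    simp only [Finset.mem_filter, Finset.mem_univ, true_and] at hj ⊢
    simpa using hj
  · intro j _
    apply Fin.ext
    simp
  · intro j _
    apply Fin.ext
    simp
  · intro j _
    congr 1 <;> simp [Fin.ext_iff]

lemma ceil_sub_mem {x : ℝ} : 0 ≤ (⌈x⌉ : ℝ) - x ∧ (⌈x⌉ : ℝ) - x ≤ 1 := by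
  constructor
  · linarith [Int.le_ceil x]
  · linarith [Int.ceil_lt_add_one x]

theorem main (m n : ℕ) (T : Fin m → Fin n → ℝ)
    (hT : ∀ i j, 0 ≤ T i j ∧ T i j ≤ 1) :
    ∃ F : Fin m → Fin n → ℝ,
      (∀ i j, F i j = 0 ∨ F i j = 1) ∧
      (∀ i j, F i j = (⌊T i j⌋ : ℝ) ∨ F i j = (⌈T i j⌉ : ℝ)) ∧
      (∀ i : Fin m, ∀ b : ℕ, 1 ≤ b → b ≤ n →
        |∑ j ∈ Finset.univ.filter (fun j : Fin n => (j : ℕ) < b), (T i j - F i j)| < 1) ∧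
      (∀ j : Fin n, ∀ b : ℕ, 1 ≤ b → b ≤ m →
        |∑ i ∈ Finset.univ.filter (fun i : Fin m => (i : ℕ) < b), (T i j - F i j)| < 1) ∧
      |∑ i : Fin m, ∑ j : Fin n, (T i j - F i j)| < 1 := by
  classical
  -- augmented matrix
  set rs : Fin m → ℝ := fun i => ∑ j, T i j with hrs
  set cs : Fin n → ℝ := fun j => ∑ i, T i j with hcs
  set rC : Fin m → ℝ := fun i => (⌈rs i⌉ : ℝ) - rs i with hrC
  set cC : Fin n → ℝ := fun j => (⌈cs j⌉ : ℝ) - cs j with hcC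
  set csum : ℝ := ∑ j, cC j with hcsum
  set corner : ℝ := (⌈csum⌉ : ℝ) - csum with hcorner
  set T' : Fin (m+1) → Fin (n+1) → ℝ := fun i j =>
    if hi : (i : ℕ) < m then
      (if hj : (j : ℕ) < n then T ⟨i, hi⟩ ⟨j, hj⟩ else rC ⟨i, hi⟩)
    else
      (if hj : (j : ℕ) < n then cC ⟨j, hj⟩ else corner) with hT'
  have hT'cast : ∀ (i : Fin m) (j : Fin n), T' i.castSucc j.castSucc = T i j := by
    intro i j
    have hi : ((i.castSucc : Fin (m+1)) : ℕ) < m := by simp [i.2]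
    have hj : ((j.castSucc : Fin (n+1)) : ℕ) < n := by simp [j.2]
    rw [hT']
    simp only [dif_pos hi, dif_pos hj]
    congr 1 <;> apply Fin.ext <;> simp
  have hT'rlast : ∀ (i : Fin m), T' i.castSucc (Fin.last n) = rC i := by
    intro i
    have hi : ((i.castSucc : Fin (m+1)) : ℕ) < m := by simp [i.2]
    rw [hT']
    simp only [dif_pos hi, Fin.val_last, lt_irrefl, dif_neg (lt_irrefl n)]
    congr 1 <;> simp [Fin.ext_iff]
  have hT'clast : ∀ (j : Fin n), T' (Fin.last m) j.castSucc = cC j := by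
    intro j
    have hj : ((j.castSucc : Fin (n+1)) : ℕ) < n := by simp [j.2]
    rw [hT']
    simp only [Fin.val_last, dif_neg (lt_irrefl m), dif_pos hj]
    congr 1 <;> simp [Fin.ext_iff]
  have hT'corner : T' (Fin.last m) (Fin.last n) = corner := by
    rw [hT']
    simp [dif_neg (lt_irrefl m), dif_neg (lt_irrefl n)]
  -- entries of T' in [0,1]
  have hT'01 : ∀ i j, 0 ≤ T' i j ∧ T' i j ≤ 1 := by
    intro i j
    rw [hT']
    by_cases hi : (i : ℕ) < m <;> by_cases hj : (j : ℕ) < n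
    · simp only [dif_pos hi, dif_pos hj]; exact hT _ _
    · simp only [dif_pos hi, dif_neg hj]; exact ceil_sub_mem
    · simp only [dif_neg hi, dif_pos hj]; exact ceil_sub_mem
    · simp only [dif_neg hi, dif_neg hj]; exact ceil_sub_mem
  -- row sums of T' are integers
  have hrowsum : ∀ i : Fin (m+1), ∑ j, T' i j =
      if hi : (i : ℕ) < m then (⌈rs ⟨i, hi⟩⌉ : ℝ) else (⌈csum⌉ : ℝ) := by
    intro i
    rw [Fin.sum_univ_castSucc (f := fun j => T' i j)]
    by_cases hi : (i : ℕ) < m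
    · rw [dif_pos hi]
      have hlast : T' i (Fin.last n) = rC ⟨i, hi⟩ := by
        have := hT'rlast ⟨i, hi⟩
        rwa [show (⟨i, hi⟩ : Fin m).castSucc = i from Fin.ext (by simp)] at this
      have hcast : ∀ j : Fin n, T' i j.castSucc = T ⟨i, hi⟩ j := by
        intro j
        have := hT'cast ⟨i, hi⟩ j
        rwa [show (⟨i, hi⟩ : Fin m).castSucc = i from Fin.ext (by simp)] at this
      rw [hlast, Finset.sum_congr rfl (fun j _ => hcast j)]
      rw [hrC]
      show rs ⟨i, hi⟩ + ((⌈rs ⟨i, hi⟩⌉ : ℝ) - rs ⟨i, hi⟩) = _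
      ring
    · rw [dif_neg hi]
      have hilast : i = Fin.last m := by
        apply Fin.ext
        have := i.2
        simp only [Fin.val_last]
        omega
      subst hilast
      rw [hT'corner, Finset.sum_congr rfl (fun j _ => hT'clast j)]
      rw [hcorner, ← hcsum]
      ring
  have hrowInt : ∀ i : Fin (m+1), IsInt (∑ j, T' i j) := by
    intro i
    rw [hrowsum i]
    by_cases hi : (i : ℕ) < m
    · rw [dif_pos hi]; exact ⟨_, rfl⟩
    · rw [dif_neg hi]; exact ⟨_, rfl⟩
  -- column sums of T' are integers
  have hcolsum : ∀ j : Fin (n+1), ∑ i, T' i j =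
      if hj : (j : ℕ) < n then (⌈cs ⟨j, hj⟩⌉ : ℝ)
      else (∑ i, (⌈rs i⌉ : ℝ)) + (⌈csum⌉ : ℝ) - ∑ j', (⌈cs j'⌉ : ℝ) := by
    intro j
    rw [Fin.sum_univ_castSucc (f := fun i => T' i j)]
    by_cases hj : (j : ℕ) < n
    · rw [dif_pos hj]
      have hlast : T' (Fin.last m) j = cC ⟨j, hj⟩ := by
        have := hT'clast ⟨j, hj⟩
        rwa [show (⟨j, hj⟩ : Fin n).castSucc = j from Fin.ext (by simp)] at this
      have hcast : ∀ i : Fin m, T' i.castSucc j = T i ⟨j, hj⟩ := by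
        intro i
        have := hT'cast i ⟨j, hj⟩
        rwa [show (⟨j, hj⟩ : Fin n).castSucc = j from Fin.ext (by simp)] at this
      rw [hlast, Finset.sum_congr rfl (fun i _ => hcast i)]
      rw [hcC]
      show cs ⟨j, hj⟩ + ((⌈cs ⟨j, hj⟩⌉ : ℝ) - cs ⟨j, hj⟩) = _
      ring
    · rw [dif_neg hj]
      have hjlast : j = Fin.last n := by
        apply Fin.ext
        have := j.2
        simp only [Fin.val_last]
        omega
      subst hjlast
      rw [hT'corner, Finset.sum_congr rfl (fun i _ => hT'rlast i)]
      have htot : ∑ i, rs i = ∑ j', cs j' := by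
        rw [hrs, hcs]
        exact Finset.sum_comm
      have h1 : ∑ i, rC i = (∑ i, (⌈rs i⌉ : ℝ)) - ∑ i, rs i := by
        rw [hrC, Finset.sum_sub_distrib]
      have h2 : csum = (∑ j', (⌈cs j'⌉ : ℝ)) - ∑ j', cs j' := by
        rw [hcsum, hcC, Finset.sum_sub_distrib]
      rw [h1, hcorner, h2, htot]
      ring
  have hcolInt : ∀ j : Fin (n+1), IsInt (∑ i, T' i j) := by
    intro j
    rw [hcolsum j]
    by_cases hj : (j : ℕ) < n
    · rw [dif_pos hj]; exact ⟨_, rfl⟩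
    · rw [dif_neg hj]
      refine ⟨(∑ i, ⌈rs i⌉) + ⌈csum⌉ - ∑ j', ⌈cs j'⌉, ?_⟩
      push_cast
      ring
  -- apply the core theorem
  obtain ⟨F', hfeas, hF01⟩ := core T' hT'01 hrowInt hcolInt
  set F : Fin m → Fin n → ℝ := fun i j => F' i.castSucc j.castSucc with hF
  -- prefix sums of T' over original indices agree with those of T
  have hpreT : ∀ (i : Fin m) (b : ℕ), b ≤ n → pre (T' i.castSucc) b = pre (T i) b := by
    intro i b hb
    rw [pre_castSucc _ hb]
    unfold pre
    exact Finset.sum_congr rfl (fun j _ => hT'cast i j)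
  have hpreF : ∀ (i : Fin m) (b : ℕ), b ≤ n → pre (F' i.castSucc) b = pre (F i) b := by
    intro i b hb
    rw [pre_castSucc _ hb]
  have hpreTc : ∀ (j : Fin n) (b : ℕ), b ≤ m →
      pre (fun i' : Fin (m+1) => T' i' j.castSucc) b = pre (fun i => T i j) b := by
    intro j b hb
    rw [pre_castSucc _ hb]
    unfold pre
    exact Finset.sum_congr rfl (fun i _ => hT'cast i j)
  have hpreFc : ∀ (j : Fin n) (b : ℕ), b ≤ m →
      pre (fun i' : Fin (m+1) => F' i' j.castSucc) b = pre (fun i => F i j) b := by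
    intro j b hb
    rw [pre_castSucc _ hb]
  refine ⟨F, ?_, ?_, ?_, ?_, ?_⟩
  · intro i j
    exact hF01 i.castSucc j.castSucc
  · -- floor/ceil membership
    intro i j
    by_cases hint : IsInt (T i j)
    · left
      have hFT : F i j = T i j := by
        show F' i.castSucc j.castSucc = T i j
        have hh := hfeas.2.1 i.castSucc j.castSucc (by rw [hT'cast]; exact hint)
        rw [hh, hT'cast]
      obtain ⟨z, hz⟩ := hint
      rw [hFT, hz, Int.floor_intCast]
    · have h0 : 0 < T i j :=
        lt_of_le_of_ne (hT i j).1 (fun h => hint ⟨0, by rw [← h]; norm_num⟩)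
      have h1 : T i j < 1 :=
        lt_of_le_of_ne (hT i j).2 (fun h => hint ⟨1, by rw [h]; norm_num⟩)
      have hfl : ⌊T i j⌋ = 0 := Int.floor_eq_zero_iff.mpr ⟨h0.le, h1⟩
      have hcl : ⌈T i j⌉ = 1 := by
        have hle : ⌈T i j⌉ ≤ 1 := Int.ceil_le.mpr (by exact_mod_cast h1.le)
        have hge : 0 < ⌈T i j⌉ := Int.ceil_pos.mpr h0
        omega
      rcases hF01 i.castSucc j.castSucc with h | h
      · left; rw [hfl]; simpa using h
      · right; rw [hcl]; simpa using h
  · -- row prefix errors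
    intro i b _ hbn
    have hcon := hfeas.2.2.1 i.castSucc b (le_trans hbn (Nat.le_succ n))
    rw [hpreT i b hbn, hpreF i b hbn] at hcon
    have hsum : ∑ j ∈ Finset.univ.filter (fun j : Fin n => (j : ℕ) < b), (T i j - F i j)
        = pre (T i) b - pre (F i) b := by
      unfold pre
      rw [Finset.sum_sub_distrib]
    rw [hsum, abs_lt]
    have hl := Int.sub_one_lt_floor (pre (T i) b)
    have hu := Int.ceil_lt_add_one (pre (T i) b)
    constructor <;> linarith [hcon.1, hcon.2]
  · -- column prefix errors
    intro j b _ hbm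
    have hcon := hfeas.2.2.2 j.castSucc b (le_trans hbm (Nat.le_succ m))
    rw [hpreTc j b hbm, hpreFc j b hbm] at hcon
    have hsum : ∑ i ∈ Finset.univ.filter (fun i : Fin m => (i : ℕ) < b), (T i j - F i j)
        = pre (fun i => T i j) b - pre (fun i => F i j) b := by
      unfold pre
      rw [Finset.sum_sub_distrib]
    rw [hsum, abs_lt]
    have hl := Int.sub_one_lt_floor (pre (fun i => T i j) b)
    have hu := Int.ceil_lt_add_one (pre (fun i => T i j) b)
    constructor <;> linarith [hcon.1, hcon.2]
  · -- total error
    set G : Fin (m+1) → Fin (n+1) → ℝ := fun i j => T' i j - F' i j with hG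
    have hrowexact : ∀ i : Fin (m+1), ∑ j, G i j = 0 := by
      intro i
      have hσ : IsInt (pre (T' i) (n+1)) := by
        rw [pre_top _ le_rfl]; exact hrowInt i
      have hcon := hfeas.2.2.1 i (n+1) le_rfl
      have hcollapse := collapse hσ hcon.1 hcon.2
      rw [hG]
      rw [Finset.sum_sub_distrib]
      have h1 : ∑ j, F' i j = ∑ j, T' i j := by
        rw [← pre_top (F' i) (le_refl (n+1)), ← pre_top (T' i) (le_refl (n+1))]
        exact hcollapse
      rw [h1, sub_self]
    have hcolexact : ∀ j : Fin (n+1), ∑ i, G i j = 0 := by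
      intro j
      have hσ : IsInt (pre (fun i => T' i j) (m+1)) := by
        rw [pre_top _ le_rfl]; exact hcolInt j
      have hcon := hfeas.2.2.2 j (m+1) le_rfl
      have hcollapse := collapse hσ hcon.1 hcon.2
      rw [hG]
      rw [Finset.sum_sub_distrib]
      have h1 : ∑ i, F' i j = ∑ i, T' i j := by
        rw [← pre_top (fun i => F' i j) (le_refl (m+1)),
          ← pre_top (fun i => T' i j) (le_refl (m+1))]
        exact hcollapse
      rw [h1, sub_self]
    have hfull : ∑ i : Fin (m+1), ∑ j, G i j = 0 :=
      Finset.sum_eq_zero (fun i _ => hrowexact i)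
    have hexp1 : ∑ i : Fin (m+1), ∑ j, G i j
        = (∑ i : Fin m, ∑ j : Fin (n+1), G i.castSucc j) + ∑ j, G (Fin.last m) j :=
      Fin.sum_univ_castSucc (f := fun i => ∑ j, G i j)
    have hexp2 : ∀ i : Fin m, ∑ j : Fin (n+1), G i.castSucc j
        = (∑ j : Fin n, G i.castSucc j.castSucc) + G i.castSucc (Fin.last n) :=
      fun i => Fin.sum_univ_castSucc (f := fun j => G i.castSucc j)
    have hcoll : (∑ i : Fin m, G i.castSucc (Fin.last n)) + G (Fin.last m) (Fin.last n)
        = 0 := by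
      rw [← Fin.sum_univ_castSucc (f := fun i => G i (Fin.last n))]
      exact hcolexact (Fin.last n)
    have hrowl : ∑ j, G (Fin.last m) j = 0 := hrowexact (Fin.last m)
    have htarget : ∑ i : Fin m, ∑ j : Fin n, (T i j - F i j)
        = ∑ i : Fin m, ∑ j : Fin n, G i.castSucc j.castSucc := by
      apply Finset.sum_congr rfl
      intro i _
      apply Finset.sum_congr rfl
      intro j _
      show T i j - F i j = T' i.castSucc j.castSucc - F' i.castSucc j.castSucc
      rw [hT'cast]
    have hkey : ∑ i : Fin m, ∑ j : Fin n, G i.castSucc j.castSucc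
        = G (Fin.last m) (Fin.last n) := by
      have e1 : (0:ℝ) = (∑ i : Fin m,
          ((∑ j : Fin n, G i.castSucc j.castSucc) + G i.castSucc (Fin.last n)))
          + ∑ j, G (Fin.last m) j := by
        rw [← Finset.sum_congr rfl (fun i _ => hexp2 i), ← hexp1]
        exact hfull.symm
      rw [Finset.sum_add_distrib, hrowl, add_zero] at e1
      have e2 : ∑ i : Fin m, G i.castSucc (Fin.last n)
          = -G (Fin.last m) (Fin.last n) := by linarith [hcoll]
      rw [e2] at e1
      linarith
    rw [htarget, hkey]
    have hcb := hT'01 (Fin.last m) (Fin.last n)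
    rcases hF01 (Fin.last m) (Fin.last n) with h | h
    · by_cases hint : IsInt (T' (Fin.last m) (Fin.last n))
      · have hFT := hfeas.2.1 (Fin.last m) (Fin.last n) hint
        show |T' (Fin.last m) (Fin.last n) - F' (Fin.last m) (Fin.last n)| < 1
        rw [hFT, sub_self, abs_zero]
        norm_num
      · have h1 : T' (Fin.last m) (Fin.last n) < 1 :=
          lt_of_le_of_ne hcb.2 (fun hh => hint ⟨1, by rw [hh]; norm_num⟩)
        show |T' (Fin.last m) (Fin.last n) - F' (Fin.last m) (Fin.last n)| < 1
        rw [h, abs_lt]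
        constructor <;> [linarith [hcb.1]; linarith]
    · by_cases hint : IsInt (T' (Fin.last m) (Fin.last n))
      · have hFT := hfeas.2.1 (Fin.last m) (Fin.last n) hint
        show |T' (Fin.last m) (Fin.last n) - F' (Fin.last m) (Fin.last n)| < 1
        rw [hFT, sub_self, abs_zero]
        norm_num
      · have h0 : 0 < T' (Fin.last m) (Fin.last n) :=
          lt_of_le_of_ne hcb.1 (fun hh => hint ⟨0, by rw [← hh]; norm_num⟩)
        show |T' (Fin.last m) (Fin.last n) - F' (Fin.last m) (Fin.last n)| < 1
        rw [h, abs_lt]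
        constructor <;> [linarith; linarith [hcb.2]]

end Final

end

end TwoWay

/-- Two-way matrix rounding (Doerr/Knuth): every m×n real matrix with entries in [0,1]
has a {0,1}-valued rounding consistent (with error < 1) with all initial row sums,
all initial column sums, and the total sum. -/
theorem stmt6 (m n : ℕ) (T : Matrix (Fin m) (Fin n) ℝ)
    (hT : ∀ i j, 0 ≤ T i j ∧ T i j ≤ 1) :
    ∃ F : Matrix (Fin m) (Fin n) ℝ,
      (∀ i j, F i j = 0 ∨ F i j = 1) ∧
      (∀ i j, F i j = (⌊T i j⌋ : ℝ) ∨ F i j = (⌈T i j⌉ : ℝ)) ∧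
      (∀ i : Fin m, ∀ b : ℕ, 1 ≤ b → b ≤ n →
        |∑ j ∈ Finset.univ.filter (fun j : Fin n => (j : ℕ) < b), (T i j - F i j)| < 1) ∧
      (∀ j : Fin n, ∀ b : ℕ, 1 ≤ b → b ≤ m →
        |∑ i ∈ Finset.univ.filter (fun i : Fin m => (i : ℕ) < b), (T i j - F i j)| < 1) ∧
      |∑ i : Fin m, ∑ j : Fin n, (T i j - F i j)| < 1 := by
  obtain ⟨F, h1, h2, h3, h4, h5⟩ :=
    TwoWay.main m n (fun i j => T i j) (fun i j => hT i j)
  exact ⟨Matrix.of F, h1, h2, h3, h4, h5⟩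
end

section
/- Let x₁,…,x_n be real numbers and γ a permutation of {1,…,n}. Then there exist integers x̄₁,…,x̄_n with ⌊x_i⌋ ≤ x̄_i ≤ ⌈x_i⌉ for all i, such that for every 1 ≤ k ≤ n, ⌊x₁+⋯+x_k⌋ ≤ x̄₁+⋯+x̄_k ≤ ⌈x₁+⋯+x_k⌉ and ⌊x_{γ(1)}+⋯+x_{γ(k)}⌋ ≤ x̄_{γ(1)}+⋯+x̄_{γ(k)} ≤ ⌈x_{γ(1)}+⋯+x_{γ(k)}⌉. -/
open Finset

def IsIntR (r : ℝ) : Prop := ∃ z : ℤ, r = (z : ℝ)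

lemma IsIntR.sub' {a b : ℝ} (ha : IsIntR a) (hb : IsIntR b) : IsIntR (a - b) := by
  obtain ⟨z, rfl⟩ := ha; obtain ⟨w, rfl⟩ := hb; exact ⟨z - w, by push_cast; ring⟩

lemma IsIntR.sum' {ι : Type} (s : Finset ι) (f : ι → ℝ) (h : ∀ i ∈ s, IsIntR (f i)) :
    IsIntR (∑ i ∈ s, f i) := by
  classical
  induction s using Finset.induction_on with
  | empty => exact ⟨0, by simp⟩
  | @insert a s ha ih =>
    obtain ⟨z, hz⟩ := h a (mem_insert_self a s)
    obtain ⟨w, hw⟩ := ih (fun i hi => h i (mem_insert_of_mem hi))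
    exact ⟨z + w, by rw [Finset.sum_insert ha, hz, hw]; push_cast; ring⟩

lemma count_lem_aux : ∀ (N : ℕ) (C : Finset ℕ) (h0 : 0 ∈ C), C.card ≤ N →
    (∀ a ∈ C, a + 1 ∉ C) → 2 * (C.card - 1) ≤ C.max' ⟨0, h0⟩ := by
  intro N
  induction N with
  | zero =>
    intro C h0 hcard
    have : C = ∅ := Finset.card_eq_zero.1 (Nat.le_zero.1 hcard)
    subst this; simp at h0
  | succ N ih =>
    intro C h0 hcard hgap
    have hne : C.Nonempty := ⟨0, h0⟩
    set M := C.max' hne with hM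
    have hMmem : M ∈ C := C.max'_mem hne
    rcases Nat.eq_zero_or_pos M with hM0 | hMpos
    · -- C = {0}
      have : C ⊆ {0} := by
        intro a ha
        have := C.le_max' a ha
        simp only [← hM, hM0, Nat.le_zero] at this
        simp [this]
      have : C.card ≤ 1 := le_trans (Finset.card_le_card this) (by simp)
      omega
    · -- remove M
      set C' := C.erase M with hC'
      have h0' : 0 ∈ C' := Finset.mem_erase.2 ⟨by omega, h0⟩
      have hne' : C'.Nonempty := ⟨0, h0'⟩
      have hcard' : C'.card = C.card - 1 := Finset.card_erase_of_mem hMmem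
      have hcardC : 2 ≤ C.card := by
        refine Finset.one_lt_card.2 ⟨0, h0, M, hMmem, by omega⟩
      have hgap' : ∀ a ∈ C', a + 1 ∉ C' := fun a ha h =>
        hgap a (Finset.mem_of_mem_erase ha) (Finset.mem_of_mem_erase h)
      have hM' : C'.max' hne' ≤ M - 2 := by
        set M' := C'.max' hne' with hM'd
        have hM'mem : M' ∈ C := Finset.mem_of_mem_erase (C'.max'_mem hne')
        have hne2 : M' ≠ M := (Finset.mem_erase.1 (C'.max'_mem hne')).1
        have hle : M' ≤ M := C.le_max' M' hM'mem
        have : M' + 1 ≠ M := by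
          intro h
          exact hgap M' hM'mem (h ▸ hMmem)
        omega
      have h1 : (1:ℕ) ∉ C := hgap 0 h0
      have hM2 : M ≠ 1 := fun h => h1 (h ▸ hMmem)
      have := ih C' h0' (by omega) hgap'
      have hfin : 2 * (C.card - 1) ≤ M := by
        have h2 : 2 * (C'.card - 1) ≤ M - 2 := le_trans this hM'
        omega
      exact hfin

section Kernel
variable {n : ℕ} (F : Finset (Fin n))

/-- prefix sum of `v` in the order given by `σ`. -/
def Pref (σ : Equiv.Perm (Fin n)) (k : ℕ) (v : Fin n → ℝ) : ℝ :=
  ∑ i ∈ univ.filter (fun i : Fin n => (i : ℕ) < k), v (σ i)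

/-- number of `F`-positions among the first `k` positions in the order `σ`. -/
def cnt (σ : Equiv.Perm (Fin n)) (k : ℕ) : ℕ :=
  (univ.filter (fun i : Fin n => (i : ℕ) < k ∧ σ i ∈ F)).card

lemma filt_subset (σ : Equiv.Perm (Fin n)) {k k' : ℕ} (h : k ≤ k') :
    univ.filter (fun i : Fin n => (i : ℕ) < k ∧ σ i ∈ F) ⊆
      univ.filter (fun i : Fin n => (i : ℕ) < k' ∧ σ i ∈ F) := by
  intro i hi
  simp only [mem_filter, mem_univ, true_and] at *
  exact ⟨lt_of_lt_of_le hi.1 h, hi.2⟩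

lemma cnt_mono (σ : Equiv.Perm (Fin n)) {k k' : ℕ} (h : k ≤ k') : cnt F σ k ≤ cnt F σ k' :=
  Finset.card_le_card (filt_subset F σ h)

lemma cnt_le (σ : Equiv.Perm (Fin n)) (k : ℕ) : cnt F σ k ≤ F.card := by
  have h1 : univ.filter (fun i : Fin n => (i : ℕ) < k ∧ σ i ∈ F) ⊆
      univ.filter (fun i : Fin n => σ i ∈ F) := by
    intro i hi; simp only [mem_filter, mem_univ, true_and] at *; exact hi.2
  have h2 : (univ.filter (fun i : Fin n => σ i ∈ F)).card = F.card := by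
    rw [← Finset.card_image_of_injective _ σ.injective]
    congr 1
    ext j
    simp only [Finset.mem_image, mem_filter, mem_univ, true_and]
    constructor
    · rintro ⟨i, hi, rfl⟩; exact hi
    · intro hj; exact ⟨σ.symm j, by simpa using hj, by simp⟩
  exact le_trans (Finset.card_le_card h1) h2.le

lemma filt_eq_of_cnt_eq (σ : Equiv.Perm (Fin n)) {k k' : ℕ} (h : k ≤ k')
    (hc : cnt F σ k = cnt F σ k') :
    univ.filter (fun i : Fin n => (i : ℕ) < k ∧ σ i ∈ F) =
      univ.filter (fun i : Fin n => (i : ℕ) < k' ∧ σ i ∈ F) :=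
  Finset.eq_of_subset_of_card_le (filt_subset F σ h) hc.ge

lemma Pref_congr_aux (σ : Equiv.Perm (Fin n)) {v : Fin n → ℝ} (hv : ∀ i, i ∉ F → v i = 0)
    {k k' : ℕ} (h : k ≤ k') (hc : cnt F σ k = cnt F σ k') : Pref σ k v = Pref σ k' v := by
  unfold Pref
  refine Finset.sum_subset ?_ ?_
  · intro i hi
    simp only [mem_filter, mem_univ, true_and] at *
    exact lt_of_lt_of_le hi h
  · intro i hi hni
    simp only [mem_filter, mem_univ, true_and] at hi hni
    apply hv
    intro hiF
    have hmem : i ∈ univ.filter (fun i : Fin n => (i : ℕ) < k' ∧ σ i ∈ F) := by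
      simp only [mem_filter, mem_univ, true_and]
      exact ⟨hi, hiF⟩
    rw [← filt_eq_of_cnt_eq F σ h hc] at hmem
    simp only [mem_filter, mem_univ, true_and] at hmem
    exact hni hmem.1

/-- If `v` vanishes off `F` and the `F`-counts agree, prefix sums agree. -/
lemma Pref_congr (σ : Equiv.Perm (Fin n)) {v : Fin n → ℝ} (hv : ∀ i, i ∉ F → v i = 0)
    {k k' : ℕ} (hc : cnt F σ k = cnt F σ k') : Pref σ k v = Pref σ k' v := by
  rcases le_total k k' with h | h
  · exact Pref_congr_aux F σ hv h hc
  · exact (Pref_congr_aux F σ hv h hc.symm).symm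

lemma Pref_zero_cnt (σ : Equiv.Perm (Fin n)) {v : Fin n → ℝ} (hv : ∀ i, i ∉ F → v i = 0)
    {k : ℕ} (hc : cnt F σ k = 0) : Pref σ k v = 0 := by
  unfold Pref
  refine Finset.sum_eq_zero fun i hi => ?_
  simp only [mem_filter, mem_univ, true_and] at hi
  apply hv
  intro hiF
  have hmem : i ∈ univ.filter (fun i : Fin n => (i : ℕ) < k ∧ σ i ∈ F) := by
    simp only [mem_filter, mem_univ, true_and]; exact ⟨hi, hiF⟩
  have := Finset.card_eq_zero.1 hc
  rw [this] at hmem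
  simp at hmem

lemma Pref_full (σ : Equiv.Perm (Fin n)) {v : Fin n → ℝ} (hv : ∀ i, i ∉ F → v i = 0)
    {k : ℕ} (hc : cnt F σ k = F.card) : Pref σ k v = ∑ j ∈ F, v j := by
  have hBcard : (univ.filter (fun i : Fin n => σ i ∈ F)).card = F.card := by
    rw [← Finset.card_image_of_injective _ σ.injective]
    congr 1
    ext j
    simp only [Finset.mem_image, mem_filter, mem_univ, true_and]
    constructor
    · rintro ⟨i, hi, rfl⟩; exact hi
    · intro hj; exact ⟨σ.symm j, by simpa using hj, by simp⟩
  have hAB : univ.filter (fun i : Fin n => (i : ℕ) < k ∧ σ i ∈ F) =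
      univ.filter (fun i : Fin n => σ i ∈ F) := by
    apply Finset.eq_of_subset_of_card_le
    · intro i hi; simp only [mem_filter, mem_univ, true_and] at *; exact hi.2
    · rw [hBcard]; exact hc.ge
  have himg : (univ.filter (fun i : Fin n => σ i ∈ F)).image σ = F := by
    ext j
    simp only [Finset.mem_image, mem_filter, mem_univ, true_and]
    constructor
    · rintro ⟨i, hi, rfl⟩; exact hi
    · intro hj; exact ⟨σ.symm j, by simpa using hj, by simp⟩
  calc Pref σ k v = ∑ i ∈ univ.filter (fun i : Fin n => (i : ℕ) < k ∧ σ i ∈ F), v (σ i) := by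
        refine (Finset.sum_subset ?_ ?_).symm
        · intro i hi; simp only [mem_filter, mem_univ, true_and] at *; exact hi.1
        · intro i hi hni
          simp only [mem_filter, mem_univ, true_and] at hi hni
          exact hv _ fun hiF => hni ⟨hi, hiF⟩
    _ = ∑ i ∈ univ.filter (fun i : Fin n => σ i ∈ F), v (σ i) := by rw [hAB]
    _ = ∑ j ∈ (univ.filter (fun i : Fin n => σ i ∈ F)).image σ, v j :=
        (Finset.sum_image (fun a _ b _ h => σ.injective h)).symm
    _ = ∑ j ∈ F, v j := by rw [himg]

/-- the gap fact: between two indices where the prefix sums of `y` are integers,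
the number of non-integer positions cannot be exactly one. -/
lemma cnt_gap (σ : Equiv.Perm (Fin n)) {y : Fin n → ℝ}
    (hF : ∀ i, i ∈ F ↔ ¬ IsIntR (y i)) {k k' : ℕ}
    (hk : IsIntR (Pref σ k y)) (hk' : IsIntR (Pref σ k' y)) :
    cnt F σ k' ≠ cnt F σ k + 1 := by
  intro heq
  have hkk' : k ≤ k' := by
    by_contra h
    push_neg at h
    have := cnt_mono F σ h.le
    omega
  classical
  set A := univ.filter (fun i : Fin n => (i : ℕ) < k ∧ σ i ∈ F) with hA
  set A' := univ.filter (fun i : Fin n => (i : ℕ) < k' ∧ σ i ∈ F) with hA'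
  have memA : ∀ i : Fin n, i ∈ A ↔ ((i : ℕ) < k ∧ σ i ∈ F) := by
    intro i; rw [hA]; simp [mem_filter]
  have memA' : ∀ i : Fin n, i ∈ A' ↔ ((i : ℕ) < k' ∧ σ i ∈ F) := by
    intro i; rw [hA']; simp [mem_filter]
  have hsub : A ⊆ A' := filt_subset F σ hkk'
  have hcardA : A.card = cnt F σ k := rfl
  have hcardA' : A'.card = cnt F σ k' := rfl
  have hcard : (A' \ A).card = 1 := by
    rw [Finset.card_sdiff_of_subset hsub]
    omega
  obtain ⟨i₀, hi₀⟩ := Finset.card_eq_one.1 hcard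
  set s := univ.filter (fun i : Fin n => (i : ℕ) < k') \
      univ.filter (fun i : Fin n => (i : ℕ) < k) with hs
  have mems : ∀ i : Fin n, i ∈ s ↔ ((i : ℕ) < k' ∧ ¬ (i : ℕ) < k) := by
    intro i; rw [hs, Finset.mem_sdiff]; simp [mem_filter]
  have hssub : univ.filter (fun i : Fin n => (i : ℕ) < k) ⊆
      univ.filter (fun i : Fin n => (i : ℕ) < k') := by
    intro i hi; simp only [mem_filter, mem_univ, true_and] at *; exact lt_of_lt_of_le hi hkk'
  have hsum : ∑ i ∈ s, y (σ i) = Pref σ k' y - Pref σ k y := by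
    rw [hs, Finset.sum_sdiff_eq_sub hssub]; rfl
  have hsint : IsIntR (∑ i ∈ s, y (σ i)) := hsum ▸ hk'.sub' hk
  have hAs : A' \ A ⊆ s := by
    intro i hi
    rw [Finset.mem_sdiff] at hi
    rw [mems]
    rw [memA'] at hi
    rw [memA] at hi
    exact ⟨hi.1.1, fun h => hi.2 ⟨h, hi.1.2⟩⟩
  have hrest : IsIntR (∑ i ∈ s \ (A' \ A), y (σ i)) := by
    refine IsIntR.sum' _ _ fun i hi => ?_
    rw [Finset.mem_sdiff] at hi
    obtain ⟨his, hiAA⟩ := hi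
    by_contra hni
    have hiF : σ i ∈ F := (hF (σ i)).2 hni
    apply hiAA
    rw [mems] at his
    rw [Finset.mem_sdiff, memA', memA]
    exact ⟨⟨his.1, hiF⟩, fun h => his.2 h.1⟩
  have hone : IsIntR (y (σ i₀)) := by
    have hsplit : ∑ i ∈ s \ (A' \ A), y (σ i) + ∑ i ∈ A' \ A, y (σ i) = ∑ i ∈ s, y (σ i) :=
      Finset.sum_sdiff hAs
    have hsingle : ∑ i ∈ A' \ A, y (σ i) = y (σ i₀) := by rw [hi₀, Finset.sum_singleton]
    rw [hsingle] at hsplit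
    have heq2 : y (σ i₀) = (∑ i ∈ s, y (σ i)) - ∑ i ∈ s \ (A' \ A), y (σ i) := by linarith
    rw [heq2]
    exact hsint.sub' hrest
  have hi₀F : σ i₀ ∈ F := by
    have hm : i₀ ∈ A' \ A := by rw [hi₀]; exact Finset.mem_singleton_self i₀
    rw [Finset.mem_sdiff, memA'] at hm
    exact hm.1.2
  exact (hF (σ i₀)).1 hi₀F hone


noncomputable section LinAlg
open Module

/-- extension by zero of a function on `F` to `Fin n`. -/
def ExtF : ((↥F : Type) → ℝ) →ₗ[ℝ] (Fin n → ℝ) where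
  toFun e i := if h : i ∈ F then e ⟨i, h⟩ else 0
  map_add' e e' := by ext i; by_cases h : i ∈ F <;> simp [h]
  map_smul' c e := by ext i; by_cases h : i ∈ F <;> simp [h]

lemma Ext_off {e : (↥F : Type) → ℝ} {i : Fin n} (h : i ∉ F) : ExtF F e i = 0 := by
  simp [ExtF, h]

lemma Ext_mem {e : (↥F : Type) → ℝ} {i : Fin n} (h : i ∈ F) : ExtF F e i = e ⟨i, h⟩ := by
  simp [ExtF, h]

lemma Ext_sum (e : (↥F : Type) → ℝ) : ∑ j ∈ F, ExtF F e j = ∑ i : ↥F, e i := by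
  rw [← Finset.sum_attach F (fun j => ExtF F e j)]
  refine Finset.sum_congr rfl fun i _ => ?_
  exact Ext_mem F i.2

/-- prefix sum as a linear map. -/
def PrefL (σ : Equiv.Perm (Fin n)) (k : ℕ) : (Fin n → ℝ) →ₗ[ℝ] ℝ :=
  ∑ i ∈ univ.filter (fun i : Fin n => (i : ℕ) < k), LinearMap.proj (σ i)

lemma PrefL_apply (σ : Equiv.Perm (Fin n)) (k : ℕ) (v : Fin n → ℝ) :
    PrefL σ k v = Pref σ k v := by
  simp [PrefL, Pref, LinearMap.sum_apply]

/-- For a single order `σ` with tight set `T`, there is a subspace of the space of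
functions on `F` on which all tight prefix sums vanish, of suitably large dimension. -/
lemma order_space (σ : Equiv.Perm (Fin n)) (y : Fin n → ℝ)
    (hF : ∀ i, i ∈ F ↔ ¬ IsIntR (y i)) (hFne : F.Nonempty)
    (T : Finset ℕ) (h0 : 0 ∈ T) (hT : ∀ k ∈ T, IsIntR (Pref σ k y)) :
    ∃ (K : Submodule ℝ ((↥F : Type) → ℝ)) (a : ℕ),
      (∀ e ∈ K, ∀ k ∈ T, Pref σ k (ExtF F e) = 0) ∧
      F.card ≤ Module.finrank ℝ K + a ∧
      ((2 * a ≤ F.card ∧ ∀ e ∈ K, ∑ i : ↥F, e i = 0) ∨ 2 * a + 1 ≤ F.card) := by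
  classical
  set C : Finset ℕ := T.image (cnt F σ) with hC
  set C' : Finset ℕ := C.erase 0 with hC'
  -- representative function
  have hrep : ∀ m ∈ C', ∃ k ∈ T, cnt F σ k = m := by
    intro m hm
    have := Finset.mem_of_mem_erase hm
    rw [hC, Finset.mem_image] at this
    exact this
  choose! r hrT hrc using hrep
  -- the constraint map
  set Θ : ((↥F : Type) → ℝ) →ₗ[ℝ] ((↥C' : Type) → ℝ) :=
    LinearMap.pi (fun m => (PrefL σ (r m)).comp (ExtF F)) with hΘ
  refine ⟨LinearMap.ker Θ, C'.card, ?_, ?_, ?_⟩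
  · -- vanishing of all tight prefix sums
    intro e he k hk
    have hΘe : ∀ m : ↥C', Pref σ (r m) (ExtF F e) = 0 := by
      intro m
      have := congrFun (LinearMap.mem_ker.1 he) m
      simpa [hΘ, LinearMap.pi_apply, PrefL_apply] using this
    rcases Nat.eq_zero_or_pos (cnt F σ k) with hz | hp
    · exact Pref_zero_cnt F σ (fun i h => Ext_off F h) hz
    · have hmem : cnt F σ k ∈ C' := by
        rw [hC', Finset.mem_erase]
        exact ⟨by omega, by rw [hC, Finset.mem_image]; exact ⟨k, hk, rfl⟩⟩
      have h1 := hΘe ⟨cnt F σ k, hmem⟩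
      have h2 : cnt F σ (r (cnt F σ k)) = cnt F σ k := hrc _ hmem
      calc Pref σ k (ExtF F e) = Pref σ (r (cnt F σ k)) (ExtF F e) :=
            Pref_congr F σ (fun i h => Ext_off F h) h2.symm
        _ = 0 := h1
  · -- dimension bound
    have hrn := LinearMap.finrank_range_add_finrank_ker Θ
    have hdom : Module.finrank ℝ ((↥F : Type) → ℝ) = F.card := by
      simp [Module.finrank_pi]
    have hcod : Module.finrank ℝ ((↥C' : Type) → ℝ) = C'.card := by
      simp [Module.finrank_pi]
    have hrange : Module.finrank ℝ (LinearMap.range Θ) ≤ C'.card := by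
      rw [← hcod]
      exact Submodule.finrank_le _
    omega
  · -- counting
    have h0C : 0 ∈ C := by
      rw [hC, Finset.mem_image]
      refine ⟨0, h0, ?_⟩
      unfold cnt
      rw [Finset.card_eq_zero]
      ext i; simp
    have hgap : ∀ a ∈ C, a + 1 ∉ C := by
      intro a ha hb
      rw [hC, Finset.mem_image] at ha hb
      obtain ⟨k, hk, rfl⟩ := ha
      obtain ⟨k', hk', hk'c⟩ := hb
      exact cnt_gap F σ hF (hT k hk) (hT k' hk') hk'c
    have hcount := count_lem_aux C.card C h0C le_rfl hgap
    set M := C.max' ⟨0, h0C⟩ with hM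
    have hMC : M ∈ C := C.max'_mem _
    have hMle : M ≤ F.card := by
      rw [hC, Finset.mem_image] at hMC
      obtain ⟨k, _, hkM⟩ := hMC
      rw [← hkM]
      exact cnt_le F σ k
    have hC'card : C'.card = C.card - 1 := Finset.card_erase_of_mem h0C
    have hCpos : 1 ≤ C.card := Finset.card_pos.2 ⟨0, h0C⟩
    rcases eq_or_lt_of_le hMle with hMeq | hMlt
    · -- full case
      left
      constructor
      · omega
      · intro e he
        have hFcC' : F.card ∈ C' := by
          rw [hC', Finset.mem_erase]
          refine ⟨?_, hMeq ▸ hMC⟩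
          have := Finset.card_pos.2 hFne
          omega
        have hΘe : Pref σ (r F.card) (ExtF F e) = 0 := by
          have := congrFun (LinearMap.mem_ker.1 he) ⟨F.card, hFcC'⟩
          simpa [hΘ, LinearMap.pi_apply, PrefL_apply] using this
        have hfull : cnt F σ (r F.card) = F.card := hrc _ hFcC'
        have hpf := Pref_full F σ (v := ExtF F e) (fun i h => Ext_off F h) hfull
        rw [hpf] at hΘe
        rw [← Ext_sum F e]
        exact hΘe
    · right
      omega

end LinAlg

/-- The kernel/perturbation-direction lemma: if `F` is the nonempty set of non-integral
coordinates of `y`, and prefix sums of `y` in orders `σ`, `τ` are integral on `T₁`, `T₂`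
(which contain 0), then there is a nonzero direction `d` supported on `F` all of whose
tight prefix sums vanish. -/
lemma kernel_exists (σ τ : Equiv.Perm (Fin n)) (y : Fin n → ℝ)
    (hF : ∀ i, i ∈ F ↔ ¬ IsIntR (y i)) (hFne : F.Nonempty)
    (T₁ T₂ : Finset ℕ) (h01 : 0 ∈ T₁) (h02 : 0 ∈ T₂)
    (hT1 : ∀ k ∈ T₁, IsIntR (Pref σ k y)) (hT2 : ∀ k ∈ T₂, IsIntR (Pref τ k y)) :
    ∃ d : Fin n → ℝ, (∃ i, d i ≠ 0) ∧ (∀ i, i ∉ F → d i = 0) ∧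
      (∀ k ∈ T₁, Pref σ k d = 0) ∧ (∀ k ∈ T₂, Pref τ k d = 0) := by
  classical
  obtain ⟨K₁, a₁, hK₁, hd₁, hc₁⟩ := order_space F σ y hF hFne T₁ h01 hT1
  obtain ⟨K₂, a₂, hK₂, hd₂, hc₂⟩ := order_space F τ y hF hFne T₂ h02 hT2
  have hdom : Module.finrank ℝ ((↥F : Type) → ℝ) = F.card := by
    simp [Module.finrank_pi]
  have hFpos : 1 ≤ F.card := Finset.card_pos.2 hFne
  have hsupinf := Submodule.finrank_sup_add_finrank_inf_eq K₁ K₂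
  -- bound on the dimension of the sup
  have hinfpos : 0 < Module.finrank ℝ ((K₁ ⊓ K₂ : Submodule ℝ ((↥F : Type) → ℝ))) := by
    rcases hc₁ with ⟨ha₁, hs₁⟩ | ha₁ <;> rcases hc₂ with ⟨ha₂, hs₂⟩ | ha₂
    · -- both full: sup contained in the hyperplane of sum-zero functions
      set ℓ : ((↥F : Type) → ℝ) →ₗ[ℝ] ℝ :=
        ∑ i : ↥F, LinearMap.proj i with hℓ
      have hℓap : ∀ e, ℓ e = ∑ i : ↥F, e i := by
        intro e; simp [hℓ, LinearMap.sum_apply]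
      have hsurj : LinearMap.range ℓ = ⊤ := by
        rw [LinearMap.range_eq_top]
        intro c
        obtain ⟨i₀, hi₀⟩ := hFne
        refine ⟨Pi.single ⟨i₀, hi₀⟩ c, ?_⟩
        rw [hℓap]
        simp [Pi.single_apply]
      have hkerdim : Module.finrank ℝ (LinearMap.ker ℓ) + 1 = F.card := by
        have := LinearMap.finrank_range_add_finrank_ker ℓ
        rw [hsurj, finrank_top] at this
        rw [hdom] at this
        have h1 : Module.finrank ℝ ℝ = 1 := Module.finrank_self ℝ
        omega
      have hsup : K₁ ⊔ K₂ ≤ LinearMap.ker ℓ := by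
        refine sup_le ?_ ?_
        · intro e he; rw [LinearMap.mem_ker, hℓap]; exact hs₁ e he
        · intro e he; rw [LinearMap.mem_ker, hℓap]; exact hs₂ e he
      have hsuple : Module.finrank ℝ ((K₁ ⊔ K₂ : Submodule ℝ ((↥F : Type) → ℝ)))
          ≤ Module.finrank ℝ (LinearMap.ker ℓ) := Submodule.finrank_mono hsup
      omega
    all_goals
      have hsuple : Module.finrank ℝ ((K₁ ⊔ K₂ : Submodule ℝ ((↥F : Type) → ℝ))) ≤ F.card := by
        rw [← hdom]; exact Submodule.finrank_le _
      omega
  have hne : (K₁ ⊓ K₂ : Submodule ℝ ((↥F : Type) → ℝ)) ≠ ⊥ := by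
    intro h
    rw [h] at hinfpos
    simp at hinfpos
  obtain ⟨e, he, hene⟩ := Submodule.exists_mem_ne_zero_of_ne_bot hne
  refine ⟨ExtF F e, ?_, fun i h => Ext_off F h, ?_, ?_⟩
  · obtain ⟨j, hj⟩ := Function.ne_iff.1 hene
    exact ⟨j, by rw [Ext_mem F j.2]; simpa using hj⟩
  · exact hK₁ e he.1
  · exact hK₂ e he.2

end Kernel


noncomputable section Step
open Classical
variable {n : ℕ} (x : Fin n → ℝ) (γ : Equiv.Perm (Fin n))

/-- constraint index type: coordinate bounds, identity-order prefixes, γ-order prefixes -/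
abbrev CIdx (n : ℕ) : Type := (Fin n) ⊕ ((Fin (n+1)) ⊕ (Fin (n+1)))

def cval (c : CIdx n) (v : Fin n → ℝ) : ℝ :=
  match c with
  | .inl i => v i
  | .inr (.inl k) => Pref 1 (k : ℕ) v
  | .inr (.inr k) => Pref γ (k : ℕ) v

def clo (c : CIdx n) : ℝ :=
  match c with
  | .inl i => (⌊x i⌋ : ℝ)
  | .inr (.inl k) => (⌊Pref 1 (k : ℕ) x⌋ : ℝ)
  | .inr (.inr k) => (⌊Pref γ (k : ℕ) x⌋ : ℝ)

def chi (c : CIdx n) : ℝ :=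
  match c with
  | .inl i => (⌈x i⌉ : ℝ)
  | .inr (.inl k) => (⌈Pref 1 (k : ℕ) x⌉ : ℝ)
  | .inr (.inr k) => (⌈Pref γ (k : ℕ) x⌉ : ℝ)

def InP (v : Fin n → ℝ) : Prop := ∀ c : CIdx n, clo x γ c ≤ cval γ c v ∧ cval γ c v ≤ chi x γ c

def TightS (v : Fin n → ℝ) : Finset (CIdx n) :=
  Finset.univ.filter (fun c => cval γ c v = clo x γ c ∨ cval γ c v = chi x γ c)

lemma mem_TightS {v : Fin n → ℝ} {c : CIdx n} :
    c ∈ TightS x γ v ↔ (cval γ c v = clo x γ c ∨ cval γ c v = chi x γ c) := by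
  simp [TightS]

lemma cval_linear (c : CIdx n) (v d : Fin n → ℝ) (t : ℝ) :
    cval γ c (fun i => v i + t * d i) = cval γ c v + t * cval γ c d := by
  rcases c with i | k | k
  · simp [cval]
  · simp [cval, Pref, Finset.sum_add_distrib, Finset.mul_sum]
  · simp [cval, Pref, Finset.sum_add_distrib, Finset.mul_sum]

lemma clo_int (c : CIdx n) : IsIntR (clo x γ c) := by
  rcases c with i | k | k <;> exact ⟨_, rfl⟩

lemma chi_int (c : CIdx n) : IsIntR (chi x γ c) := by
  rcases c with i | k | k <;> exact ⟨_, rfl⟩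

lemma Pref_zero (σ : Equiv.Perm (Fin n)) (v : Fin n → ℝ) : Pref σ 0 v = 0 := by
  unfold Pref
  apply Finset.sum_eq_zero
  intro i hi
  simp at hi

lemma tight_zero (v : Fin n → ℝ) : (Sum.inr (Sum.inl (0 : Fin (n+1))) : CIdx n) ∈ TightS x γ v := by
  rw [mem_TightS]
  left
  show Pref 1 ((0 : Fin (n+1)) : ℕ) v = (⌊Pref 1 ((0 : Fin (n+1)) : ℕ) x⌋ : ℝ)
  simp [Pref_zero]

lemma tight_zero' (v : Fin n → ℝ) : (Sum.inr (Sum.inr (0 : Fin (n+1))) : CIdx n) ∈ TightS x γ v := by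
  rw [mem_TightS]
  left
  show Pref γ ((0 : Fin (n+1)) : ℕ) v = (⌊Pref γ ((0 : Fin (n+1)) : ℕ) x⌋ : ℝ)
  simp [Pref_zero]

/-- The main perturbation step: given a point of the polytope with some non-integral
coordinate, we can move to a point with strictly more tight constraints. -/
lemma step_lemma (v : Fin n → ℝ) (hv : InP x γ v) (hFne : ∃ i, ¬ IsIntR (v i)) :
    ∃ v', InP x γ v' ∧ (TightS x γ v).card < (TightS x γ v').card := by
  classical
  set F : Finset (Fin n) := Finset.univ.filter (fun i => ¬ IsIntR (v i)) with hFdef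
  have hF : ∀ i, i ∈ F ↔ ¬ IsIntR (v i) := by intro i; simp [hFdef]
  have hFne' : F.Nonempty := by
    obtain ⟨i, hi⟩ := hFne
    exact ⟨i, (hF i).2 hi⟩
  set T₁ : Finset ℕ := (Finset.univ.filter
      (fun k : Fin (n+1) => (Sum.inr (Sum.inl k) : CIdx n) ∈ TightS x γ v)).image Fin.val with hT₁def
  set T₂ : Finset ℕ := (Finset.univ.filter
      (fun k : Fin (n+1) => (Sum.inr (Sum.inr k) : CIdx n) ∈ TightS x γ v)).image Fin.val with hT₂def
  have h01 : 0 ∈ T₁ := by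
    rw [hT₁def, Finset.mem_image]
    exact ⟨0, by simp [tight_zero x γ v], rfl⟩
  have h02 : 0 ∈ T₂ := by
    rw [hT₂def, Finset.mem_image]
    exact ⟨0, by simp [tight_zero' x γ v], rfl⟩
  have hT1 : ∀ k ∈ T₁, IsIntR (Pref 1 k v) := by
    intro k hk
    rw [hT₁def, Finset.mem_image] at hk
    obtain ⟨k', hk', rfl⟩ := hk
    rw [Finset.mem_filter] at hk'
    rcases (mem_TightS x γ).1 hk'.2 with h | h
    · show IsIntR (cval γ (Sum.inr (Sum.inl k')) v)
      rw [h]; exact clo_int x γ _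
    · show IsIntR (cval γ (Sum.inr (Sum.inl k')) v)
      rw [h]; exact chi_int x γ _
  have hT2 : ∀ k ∈ T₂, IsIntR (Pref γ k v) := by
    intro k hk
    rw [hT₂def, Finset.mem_image] at hk
    obtain ⟨k', hk', rfl⟩ := hk
    rw [Finset.mem_filter] at hk'
    rcases (mem_TightS x γ).1 hk'.2 with h | h
    · show IsIntR (cval γ (Sum.inr (Sum.inr k')) v)
      rw [h]; exact clo_int x γ _
    · show IsIntR (cval γ (Sum.inr (Sum.inr k')) v)
      rw [h]; exact chi_int x γ _
  obtain ⟨d, ⟨i₀, hi₀⟩, hdsupp, hd1, hd2⟩ :=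
    kernel_exists F 1 γ v hF hFne' T₁ T₂ h01 h02 hT1 hT2
  -- all tight constraints have zero derivative along d
  have hzero : ∀ c ∈ TightS x γ v, cval γ c d = 0 := by
    intro c hc
    rcases c with i | k | k
    · -- bound constraint: the coordinate is integral
      apply hdsupp
      rw [hF, not_not]
      rcases (mem_TightS x γ).1 hc with h | h
      · show IsIntR (cval γ (Sum.inl i) v)
        rw [h]; exact clo_int x γ (Sum.inl i)
      · show IsIntR (cval γ (Sum.inl i) v)
        rw [h]; exact chi_int x γ (Sum.inl i)
    · apply hd1
      rw [hT₁def, Finset.mem_image]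
      exact ⟨k, by simp [Finset.mem_filter, hc], rfl⟩
    · apply hd2
      rw [hT₂def, Finset.mem_image]
      exact ⟨k, by simp [Finset.mem_filter, hc], rfl⟩
  -- blocking constraints
  set B : Finset (CIdx n) := Finset.univ.filter (fun c => cval γ c d ≠ 0) with hBdef
  have hBne : B.Nonempty := ⟨Sum.inl i₀, by rw [hBdef, Finset.mem_filter]; exact ⟨Finset.mem_univ _, hi₀⟩⟩
  have hBnotTight : ∀ c ∈ B, c ∉ TightS x γ v := by
    intro c hc ht
    rw [hBdef, Finset.mem_filter] at hc
    exact hc.2 (hzero c ht)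
  have hstrict : ∀ c ∈ B, clo x γ c < cval γ c v ∧ cval γ c v < chi x γ c := by
    intro c hc
    have h1 := (hv c).1
    have h2 := (hv c).2
    have h3 := hBnotTight c hc
    rw [mem_TightS] at h3
    push_neg at h3
    exact ⟨lt_of_le_of_ne h1 (Ne.symm h3.1), lt_of_le_of_ne h2 h3.2⟩
  set gap : CIdx n → ℝ := fun c =>
    if 0 < cval γ c d then (chi x γ c - cval γ c v) / cval γ c d
    else (clo x γ c - cval γ c v) / cval γ c d with hgapdef
  have hgap_pos : ∀ c ∈ B, 0 < gap c := by
    intro c hc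
    have hd : cval γ c d ≠ 0 := by
      rw [hBdef, Finset.mem_filter] at hc; exact hc.2
    obtain ⟨hlt1, hlt2⟩ := hstrict c hc
    simp only [hgapdef]
    by_cases hpos : 0 < cval γ c d
    · rw [if_pos hpos]
      exact div_pos (by linarith) hpos
    · rw [if_neg hpos]
      have hneg : cval γ c d < 0 := lt_of_le_of_ne (not_lt.1 hpos) hd
      exact div_pos_iff.2 (Or.inr ⟨by linarith, hneg⟩)
  set t : ℝ := (B.image gap).min' (hBne.image gap) with htdef
  have ht_mem : t ∈ B.image gap := Finset.min'_mem _ _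
  obtain ⟨cstar, hcstarB, hcstar⟩ := Finset.mem_image.1 ht_mem
  have ht_pos : 0 < t := hcstar ▸ hgap_pos cstar hcstarB
  have ht_min : ∀ c ∈ B, t ≤ gap c := fun c hc =>
    Finset.min'_le _ _ (Finset.mem_image_of_mem gap hc)
  set v' : Fin n → ℝ := fun i => v i + t * d i with hv'def
  have hval : ∀ c, cval γ c v' = cval γ c v + t * cval γ c d := fun c =>
    cval_linear γ c v d t
  have hInP' : InP x γ v' := by
    intro c
    rw [hval]
    by_cases hB : c ∈ B
    · have hd : cval γ c d ≠ 0 := by rw [hBdef, Finset.mem_filter] at hB; exact hB.2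
      obtain ⟨hlt1, hlt2⟩ := hstrict c hB
      have hmin := ht_min c hB
      by_cases hpos : 0 < cval γ c d
      · constructor
        · have h0 : 0 ≤ t * cval γ c d := mul_nonneg ht_pos.le hpos.le
          linarith
        · have hg : gap c = (chi x γ c - cval γ c v) / cval γ c d := by
            simp only [hgapdef]; rw [if_pos hpos]
          rw [hg] at hmin
          have h1 : t * cval γ c d ≤ chi x γ c - cval γ c v := (le_div_iff₀ hpos).1 hmin
          linarith
      · have hneg : cval γ c d < 0 := lt_of_le_of_ne (not_lt.1 hpos) hd
        constructor
        · have hg : gap c = (clo x γ c - cval γ c v) / cval γ c d := by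
            simp only [hgapdef]; rw [if_neg hpos]
          rw [hg] at hmin
          have h1 : clo x γ c - cval γ c v ≤ t * cval γ c d := (le_div_iff_of_neg hneg).1 hmin
          linarith
        · have h0 : t * cval γ c d ≤ 0 := mul_nonpos_of_nonneg_of_nonpos ht_pos.le hneg.le
          linarith
    · have : cval γ c d = 0 := by
        by_contra h
        exact hB (by rw [hBdef, Finset.mem_filter]; exact ⟨Finset.mem_univ c, h⟩)
      rw [this]
      simpa using hv c
  have hsub : TightS x γ v ⊆ TightS x γ v' := by
    intro c hc
    have hz := hzero c hc
    rw [mem_TightS] at hc ⊢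
    rw [hval, hz]
    simpa using hc
  have hcstarTight : cstar ∈ TightS x γ v' := by
    rw [mem_TightS, hval]
    have hd : cval γ cstar d ≠ 0 := by rw [hBdef, Finset.mem_filter] at hcstarB; exact hcstarB.2
    by_cases hpos : 0 < cval γ cstar d
    · right
      rw [← hcstar]
      simp only [hgapdef]
      rw [if_pos hpos]
      rw [div_mul_cancel₀ _ hd]
      ring
    · left
      rw [← hcstar]
      simp only [hgapdef]
      rw [if_neg hpos]
      rw [div_mul_cancel₀ _ hd]
      ring
  refine ⟨v', hInP', ?_⟩
  apply Finset.card_lt_card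
  rw [Finset.ssubset_iff_of_subset hsub]
  exact ⟨cstar, hcstarTight, hBnotTight cstar hcstarB⟩

end Step


section Main
variable {n : ℕ} (x : Fin n → ℝ) (γ : Equiv.Perm (Fin n))

lemma exists_integral_aux : ∀ (m : ℕ) (v : Fin n → ℝ), InP x γ v →
    Fintype.card (CIdx n) ≤ (TightS x γ v).card + m →
    ∃ w, InP x γ w ∧ ∀ i, IsIntR (w i) := by
  intro m
  induction m with
  | zero =>
    intro v hv hb
    by_cases h : ∀ i, IsIntR (v i)
    · exact ⟨v, hv, h⟩
    · push_neg at h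
      obtain ⟨v', _, h2⟩ := step_lemma x γ v hv h
      have h3 : (TightS x γ v').card ≤ Fintype.card (CIdx n) := by
        rw [← Finset.card_univ]
        exact Finset.card_le_univ _
      omega
  | succ m ih =>
    intro v hv hb
    by_cases h : ∀ i, IsIntR (v i)
    · exact ⟨v, hv, h⟩
    · push_neg at h
      obtain ⟨v', h1, h2⟩ := step_lemma x γ v hv h
      exact ih v' h1 (by omega)

lemma x_in_P : InP x γ x := by
  intro c
  rcases c with i | k | k
  · exact ⟨Int.floor_le _, Int.le_ceil _⟩
  · exact ⟨Int.floor_le _, Int.le_ceil _⟩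
  · exact ⟨Int.floor_le _, Int.le_ceil _⟩

lemma exists_integral : ∃ w, InP x γ w ∧ ∀ i, IsIntR (w i) :=
  exists_integral_aux x γ (Fintype.card (CIdx n)) x (x_in_P x γ) (by omega)

end Main

/-- Knuth's two-way rounding theorem: for reals x₁,…,x_n and a permutation γ there is a
rounding x̄ whose partial sums are consistent with those of x in both the identity order
and the order given by γ. -/
theorem stmt7 (n : ℕ) (x : Fin n → ℝ) (γ : Equiv.Perm (Fin n)) :
    ∃ xb : Fin n → ℤ,
      (∀ i, ⌊x i⌋ ≤ xb i ∧ xb i ≤ ⌈x i⌉) ∧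
      (∀ k : ℕ, 1 ≤ k → k ≤ n →
        (⌊∑ i ∈ Finset.univ.filter (fun i : Fin n => (i : ℕ) < k), x i⌋
            ≤ ∑ i ∈ Finset.univ.filter (fun i : Fin n => (i : ℕ) < k), xb i ∧
          ∑ i ∈ Finset.univ.filter (fun i : Fin n => (i : ℕ) < k), xb i
            ≤ ⌈∑ i ∈ Finset.univ.filter (fun i : Fin n => (i : ℕ) < k), x i⌉) ∧
        (⌊∑ i ∈ Finset.univ.filter (fun i : Fin n => (i : ℕ) < k), x (γ i)⌋
            ≤ ∑ i ∈ Finset.univ.filter (fun i : Fin n => (i : ℕ) < k), xb (γ i) ∧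
          ∑ i ∈ Finset.univ.filter (fun i : Fin n => (i : ℕ) < k), xb (γ i)
            ≤ ⌈∑ i ∈ Finset.univ.filter (fun i : Fin n => (i : ℕ) < k), x (γ i)⌉)) := by
  obtain ⟨w, hw, hwint⟩ := exists_integral x γ
  choose z hz using hwint
  refine ⟨z, ?_, ?_⟩
  · intro i
    have h := hw (Sum.inl i)
    have hv : cval γ (Sum.inl i) w = (z i : ℝ) := hz i
    rw [hv] at h
    have h1 : (⌊x i⌋ : ℝ) ≤ (z i : ℝ) := h.1
    have h2 : (z i : ℝ) ≤ (⌈x i⌉ : ℝ) := h.2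
    exact ⟨Int.cast_le.1 h1, Int.cast_le.1 h2⟩
  · intro k hk1 hkn
    have hklt : k < n + 1 := by omega
    have hPw1 : Pref (1 : Equiv.Perm (Fin n)) k w
        = ((∑ i ∈ Finset.univ.filter (fun i : Fin n => (i : ℕ) < k), z i : ℤ) : ℝ) := by
      unfold Pref
      push_cast
      refine Finset.sum_congr rfl fun i _ => ?_
      simpa using hz i
    have hPwγ : Pref γ k w
        = ((∑ i ∈ Finset.univ.filter (fun i : Fin n => (i : ℕ) < k), z (γ i) : ℤ) : ℝ) := by
      unfold Pref
      push_cast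
      refine Finset.sum_congr rfl fun i _ => ?_
      exact hz (γ i)
    have hPx1 : Pref (1 : Equiv.Perm (Fin n)) k x
        = ∑ i ∈ Finset.univ.filter (fun i : Fin n => (i : ℕ) < k), x i := by
      unfold Pref
      refine Finset.sum_congr rfl fun i _ => ?_
      simp
    have h1 := hw (Sum.inr (Sum.inl (⟨k, hklt⟩ : Fin (n+1))))
    have h2 := hw (Sum.inr (Sum.inr (⟨k, hklt⟩ : Fin (n+1))))
    have hc1 : cval γ (Sum.inr (Sum.inl (⟨k, hklt⟩ : Fin (n+1)))) w = Pref 1 k w := rfl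
    have hc2 : cval γ (Sum.inr (Sum.inr (⟨k, hklt⟩ : Fin (n+1)))) w = Pref γ k w := rfl
    rw [hc1, hPw1] at h1
    rw [hc2, hPwγ] at h2
    constructor
    · have hlo : (⌊∑ i ∈ Finset.univ.filter (fun i : Fin n => (i : ℕ) < k), x i⌋ : ℝ)
          ≤ ((∑ i ∈ Finset.univ.filter (fun i : Fin n => (i : ℕ) < k), z i : ℤ) : ℝ) := by
        have := h1.1
        show _ ≤ _
        calc ((⌊∑ i ∈ Finset.univ.filter (fun i : Fin n => (i : ℕ) < k), x i⌋ : ℤ) : ℝ)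
            = ((⌊Pref (1 : Equiv.Perm (Fin n)) k x⌋ : ℤ) : ℝ) := by rw [hPx1]
          _ ≤ _ := this
      have hhi : ((∑ i ∈ Finset.univ.filter (fun i : Fin n => (i : ℕ) < k), z i : ℤ) : ℝ)
          ≤ (⌈∑ i ∈ Finset.univ.filter (fun i : Fin n => (i : ℕ) < k), x i⌉ : ℝ) := by
        have := h1.2
        calc ((∑ i ∈ Finset.univ.filter (fun i : Fin n => (i : ℕ) < k), z i : ℤ) : ℝ)
            ≤ ((⌈Pref (1 : Equiv.Perm (Fin n)) k x⌉ : ℤ) : ℝ) := this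
          _ = _ := by rw [hPx1]
      exact ⟨Int.cast_le.1 hlo, Int.cast_le.1 hhi⟩
    · have hlo := h2.1
      have hhi := h2.2
      exact ⟨Int.cast_le.1 hlo, Int.cast_le.1 hhi⟩
end

section
/- Let F be a {0,1}-valued m×n matrix and row i satisfy: for some real c ≤ 1/2, every consecutive block of p entries in row i (reading with wraparound) has real 'target' sum at most pc, and suppose the partial sums of row i over-round (are at the ceiling) at position h, i.e., ∑_{j=1}^{h} f_{ij} = ⌈∑_{j=1}^{h} t_{ij}⌉ where t_{ij} ≤ c for all j and |∑_{j=1}^{b}(t_{ij}-f_{ij})| < 1 for all b. Then for every positive integer e, ∑_{j=h+1}^{h+2e} f_{ij} ≤ e. -/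
/-- If a {0,1} row f rounds a row t with all entries at most c ≤ 1/2, the initial sums of
f track those of t with error < 1, and f over-rounds (is at the ceiling) at position h,
then among the next 2e entries of f there are at most e ones. -/
theorem stmt11 (n h e : ℕ) (he : 0 < e) (hhn : h + 2 * e ≤ n)
    (c : ℝ) (hc : c ≤ 1 / 2)
    (t f : ℕ → ℝ)
    (ht : ∀ j, 1 ≤ j → j ≤ n → t j ≤ c)
    (hf : ∀ j, f j = 0 ∨ f j = 1)
    (hforward : ∑ j ∈ Finset.Icc 1 h, f j = (⌈∑ j ∈ Finset.Icc 1 h, t j⌉ : ℝ))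
    (herr : ∀ b : ℕ, 1 ≤ b → b ≤ n → |∑ j ∈ Finset.Icc 1 b, (t j - f j)| < 1) :
    ∑ j ∈ Finset.Icc (h + 1) (h + 2 * e), f j ≤ (e : ℝ) := by
  set b := h + 2 * e with hb
  have h1b : 1 ≤ b := by omega
  -- split sums
  have hIoc : ∀ m : ℕ, Finset.Icc 1 m = Finset.Ioc 0 m := by
    intro m; ext x; simp [Finset.mem_Icc, Finset.mem_Ioc]; omega
  have hIoc2 : Finset.Icc (h + 1) b = Finset.Ioc h b := by
    ext x; simp [Finset.mem_Icc, Finset.mem_Ioc]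
  have split : ∀ g : ℕ → ℝ, ∑ j ∈ Finset.Icc 1 h, g j + ∑ j ∈ Finset.Icc (h + 1) b, g j
      = ∑ j ∈ Finset.Icc 1 b, g j := by
    intro g
    rw [hIoc, hIoc, hIoc2]
    exact Finset.sum_Ioc_consecutive g (by omega) (by omega)
  have hsplit := split f
  -- the block sum is an integer
  obtain ⟨k, hk⟩ : ∃ k : ℤ, ∑ j ∈ Finset.Icc (h + 1) b, f j = (k : ℝ) := by
    refine ⟨∑ j ∈ Finset.Icc (h + 1) b, (if f j = 1 then 1 else 0 : ℤ), ?_⟩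
    push_cast
    refine Finset.sum_congr rfl fun j _ => ?_
    rcases hf j with h0 | h1
    · simp [h0]
    · simp [h1]
  -- F_h ≥ S_h
  have hge : ∑ j ∈ Finset.Icc 1 h, t j ≤ ∑ j ∈ Finset.Icc 1 h, f j := by
    rw [hforward]; exact Int.le_ceil _
  -- F_b < S_b + 1
  have herr' := herr b h1b hhn
  rw [Finset.sum_sub_distrib, abs_lt] at herr'
  have hlt : ∑ j ∈ Finset.Icc 1 b, f j < ∑ j ∈ Finset.Icc 1 b, t j + 1 := by
    linarith [herr'.1]
  -- block t sum ≤ e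
  have htsplit := split t
  have htb : ∑ j ∈ Finset.Icc (h + 1) b, t j ≤ (e : ℝ) := by
    have hcard : (Finset.Icc (h + 1) b).card = 2 * e := by
      rw [Nat.card_Icc]; omega
    calc ∑ j ∈ Finset.Icc (h + 1) b, t j
        ≤ ∑ j ∈ Finset.Icc (h + 1) b, c := by
          refine Finset.sum_le_sum fun j hj => ?_
          rw [Finset.mem_Icc] at hj
          exact ht j (by omega) (by omega)
      _ = (2 * e : ℕ) * c := by rw [Finset.sum_const, hcard, nsmul_eq_mul]
      _ ≤ (e : ℝ) := by
          push_cast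
          nlinarith [he, Nat.one_le_iff_ne_zero.mpr (Nat.pos_iff_ne_zero.mp he),
            (by exact_mod_cast he : (0:ℝ) < e)]
  -- combine: k < e + 1
  have hklt : (k : ℝ) < (e : ℝ) + 1 := by
    have := hsplit
    have := htsplit
    linarith [hk ▸ (by linarith : ∑ j ∈ Finset.Icc (h + 1) b, f j < (e:ℝ) + 1)]
  rw [hk]
  have : k < (e : ℤ) + 1 := by exact_mod_cast hklt
  exact_mod_cast (by omega : k ≤ (e : ℤ))
end

section
/- Suppose a {0,1} sequence f_1, f_2, … has the property that among any 2e consecutive entries following a 'forward' position there are at most e ones (and at most e+1 ones following a 'backward' position). Let N(d) denote the position of the d-th zero. If position N(d) is forward then N(d+e) - N(d) ≤ 2e, and if position N(d) is backward then N(d+e) - N(d) ≤ 2e + 2. -/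
private lemma zeros_mono (f : ℕ → ℕ) {a b : ℕ} (h : a ≤ b) :
    ((Finset.Icc 1 a).filter (fun j => f j = 0)).card ≤
    ((Finset.Icc 1 b).filter (fun j => f j = 0)).card :=
  Finset.card_le_card (Finset.filter_subset_filter _ (Finset.Icc_subset_Icc le_rfl h))

private lemma zeros_interval (f : ℕ → ℕ) (hf : ∀ j, f j ≤ 1) (h k : ℕ) :
    ((Finset.Icc (h+1) (h+k)).filter (fun j => f j = 0)).card
      = k - ∑ j ∈ Finset.Icc (h+1) (h+k), f j := by
  have hsum : ∑ j ∈ Finset.Icc (h+1) (h+k), f j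
      = ((Finset.Icc (h+1) (h+k)).filter (fun j => ¬ f j = 0)).card := by
    rw [Finset.card_eq_sum_ones, Finset.sum_filter]
    apply Finset.sum_congr rfl
    intro j _
    rcases Nat.le_one_iff_eq_zero_or_eq_one.mp (hf j) with h0 | h1
    · simp [h0]
    · simp [h1]
  have hpart := Finset.card_filter_add_card_filter_not
    (s := Finset.Icc (h+1) (h+k)) (p := fun j => f j = 0)
  have hcard : (Finset.Icc (h+1) (h+k)).card = k := by
    rw [Nat.card_Icc]; omega
  omega

private lemma zeros_split (f : ℕ → ℕ) (h k : ℕ) :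
    ((Finset.Icc 1 (h+k)).filter (fun j => f j = 0)).card
      = ((Finset.Icc 1 h).filter (fun j => f j = 0)).card
        + ((Finset.Icc (h+1) (h+k)).filter (fun j => f j = 0)).card := by
  have hun : Finset.Icc 1 (h+k) = Finset.Icc 1 h ∪ Finset.Icc (h+1) (h+k) := by
    ext x
    simp only [Finset.mem_union, Finset.mem_Icc]
    omega
  rw [hun, Finset.filter_union, Finset.card_union_of_disjoint]
  · apply Finset.disjoint_filter_filter
    rw [Finset.disjoint_left]
    intro x hx hx'
    simp only [Finset.mem_Icc] at hx hx'
    omega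


/-- For a {0,1} sequence in which any 2e consecutive entries following a forward position
contain at most e ones, and at most e+1 ones following a backward position, with N(d) the
position of the d-th zero: if N(d) is forward then N(d+e) - N(d) ≤ 2e, and if N(d) is
backward then N(d+e) - N(d) ≤ 2e + 2. -/
theorem stmt12 (f : ℕ → ℕ) (hf : ∀ j, f j ≤ 1)
    (forward : ℕ → Prop)
    (hfwd : ∀ h e : ℕ, 0 < e → forward h →
      ∑ j ∈ Finset.Icc (h + 1) (h + 2 * e), f j ≤ e)
    (hbwd : ∀ h e : ℕ, 0 < e → ¬ forward h →
      ∑ j ∈ Finset.Icc (h + 1) (h + 2 * e), f j ≤ e + 1)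
    (N : ℕ → ℕ)
    (hN : ∀ d, 1 ≤ d → 1 ≤ N d ∧ f (N d) = 0 ∧
      ((Finset.Icc 1 (N d)).filter (fun j => f j = 0)).card = d)
    (d e : ℕ) (hd : 1 ≤ d) (he : 0 < e) :
    (forward (N d) → N (d + e) - N d ≤ 2 * e) ∧
    (¬ forward (N d) → N (d + e) - N d ≤ 2 * e + 2) := by
  obtain ⟨hN1, hN0, hNc⟩ := hN d hd
  obtain ⟨hM1, hM0, hMc⟩ := hN (d + e) (by omega)
  -- key step: if the zero count up to N d + k is at least d + e, then N (d+e) ≤ N d + k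
  have key : ∀ k : ℕ,
      d + e ≤ ((Finset.Icc 1 (N d + k)).filter (fun j => f j = 0)).card →
      N (d + e) - N d ≤ k := by
    intro k hk
    by_contra hcon
    have hgt : N d + k ≤ N (d + e) - 1 := by omega
    have h1 : ((Finset.Icc 1 (N (d+e) - 1)).filter (fun j => f j = 0)).card
        + 1 ≤ ((Finset.Icc 1 (N (d+e))).filter (fun j => f j = 0)).card := by
      have : ((Finset.Icc 1 (N (d+e) - 1)).filter (fun j => f j = 0)) ∪ {N (d+e)}
          ⊆ (Finset.Icc 1 (N (d+e))).filter (fun j => f j = 0) := by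
        intro x hx
        simp only [Finset.mem_union, Finset.mem_filter, Finset.mem_Icc,
          Finset.mem_singleton] at hx ⊢
        rcases hx with ⟨⟨hx1, hx2⟩, hx3⟩ | rfl
        · exact ⟨⟨hx1, by omega⟩, hx3⟩
        · exact ⟨⟨hM1, le_rfl⟩, hM0⟩
      calc ((Finset.Icc 1 (N (d+e) - 1)).filter (fun j => f j = 0)).card + 1
          = (((Finset.Icc 1 (N (d+e) - 1)).filter (fun j => f j = 0)) ∪ {N (d+e)}).card := by
            rw [Finset.card_union_of_disjoint]
            · simp
            · simp only [Finset.disjoint_singleton_right, Finset.mem_filter,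
                Finset.mem_Icc]
              intro ⟨⟨_, h2⟩, _⟩
              omega
        _ ≤ _ := Finset.card_le_card this
    have h2 := zeros_mono f hgt
    omega
  constructor
  · intro hfw
    have hsum := hfwd (N d) e he hfw
    have hz := zeros_interval f hf (N d) (2 * e)
    have hs := zeros_split f (N d) (2 * e)
    exact key (2 * e) (by omega)
  · intro hbw
    have hsum := hbwd (N d) (e + 1) (by omega) hbw
    have hz := zeros_interval f hf (N d) (2 * (e + 1))
    have hs := zeros_split f (N d) (2 * (e + 1))
    have := key (2 * (e + 1)) (by omega)
    omega
end

section
/- If the hypercube Q_t contains a spanning r-regular cyclic caterpillar Cat(e, r), then Q_{t+1} contains a spanning r-regular cyclic caterpillar Cat(2e, r). -/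
/-- The n-dimensional hypercube: vertices are 0/1 strings of length n, adjacent when they
differ in exactly one coordinate. -/
def hypercube (n : ℕ) : SimpleGraph (Fin n → Bool) :=
  SimpleGraph.fromRel (fun x y => (Finset.univ.filter fun i => x i ≠ y i).card = 1)

/-- The r-regular cyclic caterpillar Cat(e, r): a cycle on e vertices, each cycle vertex
having exactly r pendant leaves. -/
def cyclicCaterpillar (e r : ℕ) : SimpleGraph ((ZMod e) ⊕ (ZMod e × Fin r)) :=
  SimpleGraph.fromRel (fun u v =>
    match u, v with
    | Sum.inl i, Sum.inl j => j = i + 1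
    | Sum.inl i, Sum.inr p => p.1 = i
    | _, _ => False)

/-- `H` is (isomorphic to) a spanning subgraph of `G`. -/
def containsSpanning {V W : Type*} (H : SimpleGraph V) (G : SimpleGraph W) : Prop :=
  ∃ f : V → W, Function.Bijective f ∧ ∀ u v, H.Adj u v → G.Adj (f u) (f v)

lemma hypercube_adj {n : ℕ} {x y : Fin n → Bool} :
    (hypercube n).Adj x y ↔ (Finset.univ.filter fun i => x i ≠ y i).card = 1 := by
  have hsym : (Finset.univ.filter fun i => y i ≠ x i)
      = (Finset.univ.filter fun i => x i ≠ y i) := by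
    apply Finset.filter_congr; intro i _; exact ne_comm
  constructor
  · rintro ⟨-, h | h⟩
    · exact h
    · rw [hsym] at h; exact h
  · intro h
    refine ⟨?_, Or.inl h⟩
    rintro rfl
    simp at h

lemma snoc_diff_card {n : ℕ} (x y : Fin n → Bool) (a b : Bool) :
    (Finset.univ.filter fun i : Fin (n+1) =>
        (Fin.snoc x a : Fin (n+1) → Bool) i ≠ (Fin.snoc y b : Fin (n+1) → Bool) i).card
      = (Finset.univ.filter fun i => x i ≠ y i).card + (if a ≠ b then 1 else 0) := by
  rw [Finset.card_filter, Finset.card_filter, Fin.sum_univ_castSucc]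
  simp [Fin.snoc_castSucc, Fin.snoc_last]

lemma adj_snoc_same {n : ℕ} {x y : Fin n → Bool} (a : Bool)
    (h : (hypercube n).Adj x y) :
    (hypercube (n+1)).Adj (Fin.snoc x a : Fin (n+1) → Bool) (Fin.snoc y a) := by
  rw [hypercube_adj] at h ⊢
  rw [snoc_diff_card]
  simp [h]

lemma adj_snoc_flip {n : ℕ} (x : Fin n → Bool) {a b : Bool} (h : a ≠ b) :
    (hypercube (n+1)).Adj (Fin.snoc x a : Fin (n+1) → Bool) (Fin.snoc x b) := by
  rw [hypercube_adj, snoc_diff_card]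
  simp [h]

lemma snoc_inj {n : ℕ} {x y : Fin n → Bool} {a b : Bool}
    (h : (Fin.snoc x a : Fin (n+1) → Bool) = Fin.snoc y b) : x = y ∧ a = b := by
  constructor
  · funext i
    have := congrFun h i.castSucc
    simpa using this
  · have := congrFun h (Fin.last n)
    simpa using this

lemma cat_cycle_adj (m r : ℕ) [Fact (1 < m)] (i : ZMod m) :
    (cyclicCaterpillar m r).Adj (Sum.inl i) (Sum.inl (i + 1)) := by
  refine ⟨?_, Or.inl rfl⟩
  simp only [ne_eq, Sum.inl.injEq]
  intro hh
  exact one_ne_zero (left_eq_add.mp hh)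

lemma cat_leaf_adj (m r : ℕ) (i : ZMod m) (k : Fin r) :
    (cyclicCaterpillar m r).Adj (Sum.inl i) (Sum.inr (i, k)) := by
  exact ⟨by simp, Or.inl rfl⟩

/-- If Q_t contains a spanning r-regular cyclic caterpillar Cat(e, r), then Q_{t+1}
contains a spanning r-regular cyclic caterpillar Cat(2e, r). -/
theorem stmt13 (t e r : ℕ) (he : 3 ≤ e)
    (h : containsSpanning (cyclicCaterpillar e r) (hypercube t)) :
    containsSpanning (cyclicCaterpillar (2 * e) r) (hypercube (t + 1)) := by
  obtain ⟨f, hfb, hfa⟩ := h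
  haveI : NeZero e := ⟨by omega⟩
  haveI : NeZero (2 * e) := ⟨by omega⟩
  haveI : Fact (1 < e) := ⟨by omega⟩
  haveI : Fact (1 < 2 * e) := ⟨by omega⟩
  set c : ZMod (2 * e) → ZMod e :=
    fun i => if i.val < e then (i.val : ZMod e) else ((2 * e - 1 - i.val : ℕ) : ZMod e)
    with hc_def
  set b : ZMod (2 * e) → Bool := fun i => decide (e ≤ i.val) with hb_def
  -- injectivity of the pair (c, b)
  have hcb : ∀ i j : ZMod (2 * e), c i = c j → b i = b j → i = j := by
    intro i j hc hb
    have hi : i.val < 2 * e := ZMod.val_lt i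
    have hj : j.val < 2 * e := ZMod.val_lt j
    have hbb : (e ≤ i.val) ↔ (e ≤ j.val) := by
      simpa [hb_def, decide_eq_decide] using hb
    apply ZMod.val_injective
    by_cases hie : i.val < e
    · have hje : j.val < e := by omega
      simp only [hc_def, if_pos hie, if_pos hje] at hc
      have := congrArg ZMod.val hc
      rwa [ZMod.val_cast_of_lt hie, ZMod.val_cast_of_lt hje] at this
    · have hje : ¬ j.val < e := by omega
      simp only [hc_def, if_neg hie, if_neg hje] at hc
      have := congrArg ZMod.val hc
      rw [ZMod.val_cast_of_lt (by omega), ZMod.val_cast_of_lt (by omega)] at this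
      omega
  set F : (ZMod (2 * e)) ⊕ (ZMod (2 * e) × Fin r) → (Fin (t + 1) → Bool) :=
    Sum.elim (fun i => Fin.snoc (f (Sum.inl (c i))) (b i))
      (fun p => Fin.snoc (f (Sum.inr (c p.1, p.2))) (b p.1)) with hF_def
  -- the key cycle step
  have hstep : ∀ i : ZMod (2 * e),
      (hypercube (t + 1)).Adj (F (Sum.inl i)) (F (Sum.inl (i + 1))) := by
    intro i
    have hi : i.val < 2 * e := ZMod.val_lt i
    have hval : (i + 1).val = (i.val + 1) % (2 * e) := by
      rw [ZMod.val_add, ZMod.val_one]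
    show (hypercube (t + 1)).Adj (Fin.snoc (f (Sum.inl (c i))) (b i))
      (Fin.snoc (f (Sum.inl (c (i + 1)))) (b (i + 1)))
    rcases lt_trichotomy (i.val + 1) e with hA | hA | hA
    · -- both in the first half
      have hval' : (i + 1).val = i.val + 1 := by rw [hval, Nat.mod_eq_of_lt (by omega)]
      have h1 : c (i + 1) = c i + 1 := by
        simp only [hc_def, hval', if_pos hA, if_pos (by omega : i.val < e)]
        push_cast
        ring
      have h2 : b (i + 1) = b i := by
        simp only [hb_def, hval', decide_eq_decide]
        omega
      rw [h1, h2]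
      exact adj_snoc_same _ (hfa _ _ (cat_cycle_adj e r (c i)))
    · -- crossing from first half to second half
      have hval' : (i + 1).val = e := by rw [hval, Nat.mod_eq_of_lt (by omega)]; omega
      have h1 : c (i + 1) = c i := by
        simp only [hc_def, hval', if_neg (by omega : ¬ e < e),
          if_pos (by omega : i.val < e), if_neg (lt_irrefl e)]
        congr 1
        omega
      have h2 : b i ≠ b (i + 1) := by
        simp only [hb_def, hval']
        simp
        omega
      rw [h1]
      exact adj_snoc_flip _ h2
    · rcases lt_or_eq_of_le (by omega : i.val + 1 ≤ 2 * e) with hB | hB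
      · -- both in the second half
        have hval' : (i + 1).val = i.val + 1 := by rw [hval, Nat.mod_eq_of_lt (by omega)]
        have h1 : c i = c (i + 1) + 1 := by
          simp only [hc_def, hval', if_neg (by omega : ¬ i.val < e),
            if_neg (by omega : ¬ i.val + 1 < e)]
          have : (2 * e - 1 - i.val) = (2 * e - 1 - (i.val + 1)) + 1 := by omega
          rw [this]
          push_cast
          ring
        have h2 : b (i + 1) = b i := by
          simp only [hb_def, hval', decide_eq_decide]
          omega
        rw [h1, h2]
        exact adj_snoc_same _ (hfa _ _ (cat_cycle_adj e r (c (i + 1))).symm)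
      · -- wrapping around
        have hval' : (i + 1).val = 0 := by rw [hval, hB, Nat.mod_self]
        have h1 : c (i + 1) = c i := by
          simp only [hc_def, hval', if_pos (by omega : 0 < e),
            if_neg (by omega : ¬ i.val < e)]
          have : (2 * e - 1 - i.val) = 0 := by omega
          rw [this]
        have h2 : b i ≠ b (i + 1) := by
          simp only [hb_def, hval']
          simp
          omega
        rw [h1]
        exact adj_snoc_flip _ h2
  refine ⟨F, ?_, ?_⟩
  · -- bijectivity
    rw [Fintype.bijective_iff_injective_and_card]
    constructor
    · intro u v huv
      match u, v with
      | Sum.inl i, Sum.inl j =>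
        obtain ⟨hx, hb⟩ := snoc_inj huv
        have := hfb.1 hx
        simp only [Sum.inl.injEq] at this
        rw [hcb i j this hb]
      | Sum.inl i, Sum.inr p =>
        obtain ⟨hx, -⟩ := snoc_inj huv
        exact absurd (hfb.1 hx) (by simp)
      | Sum.inr p, Sum.inl j =>
        obtain ⟨hx, -⟩ := snoc_inj huv
        exact absurd (hfb.1 hx) (by simp)
      | Sum.inr p, Sum.inr q =>
        obtain ⟨hx, hb⟩ := snoc_inj huv
        have := hfb.1 hx
        simp only [Sum.inr.injEq, Prod.mk.injEq] at this
        have h1 : p.1 = q.1 := hcb _ _ this.1 hb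
        have h2 : p.2 = q.2 := this.2
        simp [Prod.ext_iff, h1, h2]
    · have hcard : Fintype.card ((ZMod e) ⊕ (ZMod e × Fin r))
          = Fintype.card (Fin t → Bool) := Fintype.card_of_bijective hfb
      simp only [Fintype.card_sum, Fintype.card_prod, ZMod.card, Fintype.card_fin,
        Fintype.card_fun, Fintype.card_bool] at hcard ⊢
      rw [pow_succ, ← hcard]
      ring
  · -- adjacency preservation
    rintro (i | p) (j | q) huv
    · obtain ⟨-, hrel | hrel⟩ := huv
      · have hrel' : j = i + 1 := hrel
        subst hrel'
        exact hstep i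
      · have hrel' : i = j + 1 := hrel
        subst hrel'
        exact (hstep j).symm
    · obtain ⟨-, hrel | hrel⟩ := huv
      · have hrel' : q.1 = i := hrel
        obtain ⟨i', k⟩ := q
        subst hrel'
        show (hypercube (t + 1)).Adj (Fin.snoc (f (Sum.inl (c i'))) (b i'))
          (Fin.snoc (f (Sum.inr (c i', k))) (b i'))
        exact adj_snoc_same _ (hfa _ _ (cat_leaf_adj e r (c i') k))
      · exact (hrel : False).elim
    · obtain ⟨-, hrel | hrel⟩ := huv
      · exact (hrel : False).elim
      · have hrel' : p.1 = j := hrel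
        obtain ⟨j', k⟩ := p
        subst hrel'
        show (hypercube (t + 1)).Adj (Fin.snoc (f (Sum.inr (c j', k))) (b j'))
          (Fin.snoc (f (Sum.inl (c j'))) (b j'))
        exact (adj_snoc_same _ (hfa _ _ (cat_leaf_adj e r (c j') k))).symm
    · obtain ⟨-, hrel | hrel⟩ := huv
      · exact (hrel : False).elim
      · exact (hrel : False).elim
end

section
/- Suppose Q_t contains a spanning (2r+1)-regular cyclic caterpillar Cat(e, 2r+1). Then there is a bijection L : V(Q_t) → {1, 2, …, 2^t} such that for all vertices x, y, if |L(x) - L(y)| ≤ 2r + 3 (difference taken modulo 2^t) then the Hamming distance between x and y in Q_t is at most 3. -/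
def hamm {n : ℕ} (x y : Fin n → Bool) : ℕ := (Finset.univ.filter fun i => x i ≠ y i).card

lemma hamm_comm {n : ℕ} (x y : Fin n → Bool) : hamm x y = hamm y x :=
  congrArg Finset.card (Finset.filter_congr fun i _ => ne_comm)

lemma hamm_self {n : ℕ} (x : Fin n → Bool) : hamm x x = 0 := by simp [hamm]

lemma hamm_triangle {n : ℕ} (x y z : Fin n → Bool) : hamm x z ≤ hamm x y + hamm y z := by
  unfold hamm
  have hsub : (Finset.univ.filter fun i => x i ≠ z i) ⊆
      (Finset.univ.filter fun i => x i ≠ y i) ∪ (Finset.univ.filter fun i => y i ≠ z i) := by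
    intro i hi
    simp only [Finset.mem_filter, Finset.mem_union, Finset.mem_univ, true_and] at *
    by_contra hc
    push_neg at hc
    exact hi (hc.1.trans hc.2)
  exact le_trans (Finset.card_le_card hsub) (Finset.card_union_le _ _)

def catPos (e r : ℕ) : ZMod e ⊕ ZMod e × Fin (2 * r + 1) → ℕ
  | Sum.inl i => i.val * (2 * r + 2) + (2 * r + 1)
  | Sum.inr p => p.1.val * (2 * r + 2) + p.2.val

def catIdx (e r : ℕ) : ZMod e ⊕ ZMod e × Fin (2 * r + 1) → ZMod e
  | Sum.inl i => i
  | Sum.inr p => p.1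

def catOff (e r : ℕ) : ZMod e ⊕ ZMod e × Fin (2 * r + 1) → ℕ
  | Sum.inl _ => 2 * r + 1
  | Sum.inr p => p.2.val

lemma catPos_spec (e r : ℕ) (w : ZMod e ⊕ ZMod e × Fin (2 * r + 1)) :
    catPos e r w = (catIdx e r w).val * (2 * r + 2) + catOff e r w := by
  cases w <;> rfl

lemma catOff_lt (e r : ℕ) (w : ZMod e ⊕ ZMod e × Fin (2 * r + 1)) :
    catOff e r w < 2 * r + 2 := by
  cases w with
  | inl i => simp [catOff]
  | inr p => have := p.2.is_lt; simp only [catOff]; omega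

lemma catOff_max (e r : ℕ) (w : ZMod e ⊕ ZMod e × Fin (2 * r + 1))
    (h : catOff e r w + 1 = 2 * r + 2) : w = Sum.inl (catIdx e r w) := by
  cases w with
  | inl i => rfl
  | inr p => exfalso; have := p.2.is_lt; simp only [catOff] at h; omega

lemma stmt15_blockdec {m a b s t : ℕ} (hs : s < m) (ht : t < m) (h : a * m + s = b * m + t) :
    a = b ∧ s = t := by
  have hm : 0 < m := by omega
  have e1 : (m * a + s) / m = a := by
    rw [Nat.mul_add_div hm, Nat.div_eq_of_lt hs, Nat.add_zero]
  have e2 : (m * b + t) / m = b := by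
    rw [Nat.mul_add_div hm, Nat.div_eq_of_lt ht, Nat.add_zero]
  have h' : m * a + s = m * b + t := by rw [Nat.mul_comm m a, Nat.mul_comm m b]; exact h
  have hab : a = b := by rw [← e1, ← e2, h']
  subst hab
  exact ⟨rfl, Nat.add_left_cancel h'⟩

lemma catPos_lt (e r : ℕ) [NeZero e] (w : ZMod e ⊕ ZMod e × Fin (2 * r + 1)) :
    catPos e r w < e * (2 * r + 2) := by
  rw [catPos_spec]
  exact lt_of_lt_of_le (by
    calc (catIdx e r w).val * (2 * r + 2) + catOff e r w
        < (catIdx e r w).val * (2 * r + 2) + (2 * r + 2) := by have := catOff_lt e r w; omega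
      _ = ((catIdx e r w).val + 1) * (2 * r + 2) := by ring
      _ ≤ e * (2 * r + 2) := mul_le_mul_left (by have := ZMod.val_lt (catIdx e r w); omega) _)
    (le_refl _)

lemma catPos_inj (e r : ℕ) [NeZero e] : Function.Injective (catPos e r) := by
  intro u v h
  rw [catPos_spec, catPos_spec] at h
  obtain ⟨h1, h2⟩ := stmt15_blockdec (catOff_lt e r u) (catOff_lt e r v) h
  have hidx : catIdx e r u = catIdx e r v := ZMod.val_injective e h1
  cases u with
  | inl i =>
    cases v with
    | inl i' => simp only [catIdx] at hidx; rw [hidx]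
    | inr p => exfalso; simp only [catOff] at h2; have := p.2.is_lt; omega
  | inr p =>
    cases v with
    | inl i' => exfalso; simp only [catOff] at h2; have := p.2.is_lt; omega
    | inr p' =>
      simp only [catIdx] at hidx
      simp only [catOff] at h2
      obtain ⟨i, j⟩ := p
      obtain ⟨i', j'⟩ := p'
      simp only at hidx h2
      rw [hidx, Fin.ext h2]

lemma zmod_shift {e : ℕ} [NeZero e] (i j : ZMod e) (k : ℕ)
    (h : j.val = i.val + k ∨ i.val + k = e + j.val) : j = i + (k : ZMod e) := by
  have hi : ((i.val : ℕ) : ZMod e) = i := by rw [ZMod.natCast_val, ZMod.cast_id]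
  have hj : ((j.val : ℕ) : ZMod e) = j := by rw [ZMod.natCast_val, ZMod.cast_id]
  rcases h with h | h
  · rw [← hj, h]
    push_cast
    rw [hi]
  · have h2 : ((i.val + k : ℕ) : ZMod e) = ((e + j.val : ℕ) : ZMod e) := by rw [h]
    push_cast [ZMod.natCast_self] at h2
    rw [hi, hj, zero_add] at h2
    exact h2.symm
lemma stmt15_mulstep {a e m s : ℕ} (h : a < e) (hs : s < m) : a * m + s < e * m := by
  calc a * m + s < a * m + m := by omega
    _ = (a + 1) * m := by ring
    _ ≤ e * m := mul_le_mul_left (by omega) _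

lemma stmt15_arith (e m a b s t : ℕ) (he : 3 ≤ e) (hm : 2 ≤ m) (ha : a < e) (hb : b < e)
    (hs : s < m) (ht : t < m)
    (hd : (b * m + t + (e * m - (a * m + s))) % (e * m) ≤ m + 1) :
    b = a ∨ (b = a + 1 ∨ (a + 1 = e ∧ b = 0)) ∨
      (s + 1 = m ∧ (b = a + 2 ∨ (a + 1 = e ∧ b = 1) ∨ (a + 2 = e ∧ b = 0))) := by
  have key : ∀ x y : ℕ, x ≤ y → x * m ≤ y * m := fun x y h => mul_le_mul_left h m
  obtain ⟨A, hA⟩ : ∃ A, A = a * m := ⟨_, rfl⟩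
  obtain ⟨B, hB⟩ : ∃ B, B = b * m := ⟨_, rfl⟩
  obtain ⟨E, hE⟩ : ∃ E, E = e * m := ⟨_, rfl⟩
  rw [← hA, ← hB, ← hE] at hd
  have f1 : A + m ≤ E := by
    have := key (a + 1) e ha
    calc A + m = (a + 1) * m := by rw [hA]; ring
      _ ≤ e * m := this
      _ = E := hE.symm
  have f2 : B + m ≤ E := by
    have := key (b + 1) e hb
    calc B + m = (b + 1) * m := by rw [hB]; ring
      _ ≤ e * m := this
      _ = E := hE.symm
  have hp : A + s < E := by omega
  have hq : B + t < E := by omega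
  rcases le_or_gt (A + s) (B + t) with hle | hlt
  · have h1 : B + t + (E - (A + s)) = (B + t - (A + s)) + E := by omega
    rw [h1, Nat.add_mod_right, Nat.mod_eq_of_lt (by omega)] at hd
    have hd2 : B + t ≤ A + s + m + 1 := by omega
    rcases Nat.lt_trichotomy b a with h | h | h
    · exfalso
      have : B + m ≤ A := by
        calc B + m = (b + 1) * m := by rw [hB]; ring
          _ ≤ a * m := key _ _ h
          _ = A := hA.symm
      omega
    · exact Or.inl h
    · rcases (show b = a + 1 ∨ a + 2 ≤ b by omega) with h2 | h2
      · exact Or.inr (Or.inl (Or.inl h2))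
      · have g1 : A + 2 * m ≤ B := by
          calc A + 2 * m = (a + 2) * m := by rw [hA]; ring
            _ ≤ b * m := key _ _ h2
            _ = B := hB.symm
        have hs1 : s + 1 = m := by omega
        rcases (show b = a + 2 ∨ a + 3 ≤ b by omega) with h3 | h3
        · exact Or.inr (Or.inr ⟨hs1, Or.inl h3⟩)
        · exfalso
          have g2 : A + 3 * m ≤ B := by
            calc A + 3 * m = (a + 3) * m := by rw [hA]; ring
              _ ≤ b * m := key _ _ h3
              _ = B := hB.symm
          omega
  · rw [Nat.mod_eq_of_lt (by omega)] at hd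
    have hd2 : B + t + E ≤ A + s + m + 1 := by omega
    rcases (show a + 1 = e ∨ a + 2 = e ∨ a + 3 ≤ e by omega) with h1 | h1 | h1
    · have gE : E = A + m := by rw [hE, hA, ← h1]; ring
      rcases (show b = 0 ∨ b = 1 ∨ 2 ≤ b by omega) with h2 | h2 | h2
      · exact Or.inr (Or.inl (Or.inr ⟨h1, h2⟩))
      · have gB : B = m := by rw [hB, h2]; ring
        exact Or.inr (Or.inr ⟨by omega, Or.inr (Or.inl ⟨h1, h2⟩)⟩)
      · exfalso
        have gB : 2 * m ≤ B := by
          calc 2 * m ≤ b * m := key _ _ h2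
            _ = B := hB.symm
        omega
    · have gE : E = A + 2 * m := by rw [hE, hA, ← h1]; ring
      have hB0 : B = 0 := by omega
      have hb0 : b = 0 := by
        rcases Nat.eq_zero_or_pos b with h' | h'
        · exact h'
        · exfalso
          have : 1 * m ≤ B := by
            calc 1 * m ≤ b * m := key _ _ h'
              _ = B := hB.symm
          omega
      exact Or.inr (Or.inr ⟨by omega, Or.inr (Or.inr ⟨h1, hb0⟩)⟩)
    · exfalso
      have gE : A + 3 * m ≤ E := by
        calc A + 3 * m = (a + 3) * m := by rw [hA]; ring
          _ ≤ e * m := key _ _ h1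
          _ = E := hE.symm
      omega
/-- If Q_t contains a spanning (2r+1)-regular cyclic caterpillar Cat(e, 2r+1), then there
is a bijective labeling L of the vertices of Q_t by Z/2^t such that any two vertices whose
labels differ (cyclically) by at most 2r+3 are at Hamming distance at most 3. -/
theorem stmt15 (t e r : ℕ) (he : 3 ≤ e)
    (h : containsSpanning (cyclicCaterpillar e (2 * r + 1)) (hypercube t)) :
    ∃ L : (Fin t → Bool) → ZMod (2 ^ t), Function.Bijective L ∧
      ∀ x y : Fin t → Bool,
        min (L x - L y).val (L y - L x).val ≤ 2 * r + 3 →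
        (Finset.univ.filter fun i => x i ≠ y i).card ≤ 3 := by
  classical
  obtain ⟨f, hfb, hfadj⟩ := h
  haveI : NeZero e := ⟨by omega⟩
  haveI : Fact (1 < e) := ⟨by omega⟩
  haveI : NeZero (2 ^ t) := ⟨by positivity⟩
  -- cardinality
  have hcard : e * (2 * r + 2) = 2 ^ t := by
    have h1 : Fintype.card (ZMod e ⊕ ZMod e × Fin (2 * r + 1)) = Fintype.card (Fin t → Bool) :=
      Fintype.card_of_bijective hfb
    simp [ZMod.card] at h1
    calc e * (2 * r + 2) = e + e * (2 * r + 1) := by ring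
      _ = 2 ^ t := h1
  set F := Equiv.ofBijective f hfb with hF
  -- the labeling on caterpillar vertices
  set g : (ZMod e ⊕ ZMod e × Fin (2 * r + 1)) → ZMod (2 ^ t) :=
    fun w => ((catPos e r w : ℕ) : ZMod (2 ^ t)) with hg
  have hgval : ∀ w, (g w).val = catPos e r w := fun w =>
    ZMod.val_cast_of_lt (hcard ▸ catPos_lt e r w)
  have hginj : Function.Injective g := by
    intro u v huv
    apply catPos_inj e r
    rw [← hgval u, ← hgval v, huv]
  have hgbij : Function.Bijective g := by
    rw [Fintype.bijective_iff_injective_and_card]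
    refine ⟨hginj, ?_⟩
    simp [ZMod.card, ← hcard]
    ring
  refine ⟨fun x => g (F.symm x), hgbij.comp F.symm.bijective, ?_⟩
  -- edge step bound
  have hstep : ∀ u v, (cyclicCaterpillar e (2 * r + 1)).Adj u v → hamm (f u) (f v) ≤ 1 := by
    intro u v huv
    have := hfadj u v huv
    simp only [hypercube, SimpleGraph.fromRel_adj] at this
    obtain ⟨-, h1 | h1⟩ := this
    · exact le_of_eq h1
    · rw [hamm_comm]
      exact le_of_eq h1
  have hne1 : ∀ i : ZMod e, i ≠ i + 1 := by
    intro i hi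
    exact one_ne_zero (left_eq_add.mp hi)
  have hadjspine : ∀ i : ZMod e,
      (cyclicCaterpillar e (2 * r + 1)).Adj (Sum.inl i) (Sum.inl (i + 1)) := by
    intro i
    simp only [cyclicCaterpillar, SimpleGraph.fromRel_adj]
    exact ⟨by simpa using hne1 i, Or.inl trivial⟩
  have hadjleaf : ∀ (i : ZMod e) (j : Fin (2 * r + 1)),
      (cyclicCaterpillar e (2 * r + 1)).Adj (Sum.inl i) (Sum.inr (i, j)) := by
    intro i j
    simp only [cyclicCaterpillar, SimpleGraph.fromRel_adj]
    exact ⟨by simp, Or.inl trivial⟩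
  have hspine : ∀ i : ZMod e, hamm (f (Sum.inl i)) (f (Sum.inl (i + 1))) ≤ 1 :=
    fun i => hstep _ _ (hadjspine i)
  have hub : ∀ w, hamm (f (Sum.inl (catIdx e r w))) (f w) ≤ 1 := by
    intro w
    cases w with
    | inl i => simp only [catIdx]; rw [hamm_self]; omega
    | inr p => obtain ⟨i, j⟩ := p; exact hstep _ _ (hadjleaf i j)
  have hub' : ∀ w, hamm (f w) (f (Sum.inl (catIdx e r w))) ≤ 1 := by
    intro w; rw [hamm_comm]; exact hub w
  -- the key bound
  have key : ∀ u v, ((catPos e r v : ZMod (2 ^ t)) - (catPos e r u : ZMod (2 ^ t))).val ≤ 2 * r + 3 →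
      hamm (f u) (f v) ≤ 3 := by
    intro u v hd
    -- compute the cyclic difference
    have hpu : catPos e r u < 2 ^ t := hcard ▸ catPos_lt e r u
    have hval : ((catPos e r v : ZMod (2 ^ t)) - (catPos e r u : ZMod (2 ^ t))).val
        = (catPos e r v + (2 ^ t - catPos e r u)) % 2 ^ t := by
      have h0 : ((2 : ZMod (2 ^ t))) ^ t = 0 := by
        have := ZMod.natCast_self (2 ^ t)
        push_cast at this
        exact this
      have h1 : ((catPos e r v + (2 ^ t - catPos e r u) : ℕ) : ZMod (2 ^ t))
          = (catPos e r v : ZMod (2 ^ t)) - (catPos e r u : ZMod (2 ^ t)) := by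
        push_cast [Nat.cast_sub hpu.le, h0]
        ring
      rw [← h1, ZMod.val_natCast]
    rw [hval] at hd
    rw [← hcard] at hd
    rw [catPos_spec e r u, catPos_spec e r v] at hd
    have harith := stmt15_arith e (2 * r + 2) (catIdx e r u).val (catIdx e r v).val
      (catOff e r u) (catOff e r v) he (by omega) (ZMod.val_lt _) (ZMod.val_lt _)
      (catOff_lt e r u) (catOff_lt e r v) (hd.trans (by omega))
    rcases harith with hc | hc | ⟨hsm, hc⟩
    · -- same block
      have hJ : catIdx e r v = catIdx e r u := ZMod.val_injective e hc
      have t1 := hub' u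
      have t2 : hamm (f (Sum.inl (catIdx e r u))) (f v) ≤ 1 := by rw [← hJ]; exact hub v
      have t3 := hamm_triangle (f u) (f (Sum.inl (catIdx e r u))) (f v)
      omega
    · -- adjacent blocks
      have hJ : catIdx e r v = catIdx e r u + 1 := by
        have := zmod_shift (catIdx e r u) (catIdx e r v) 1 (by omega)
        rwa [Nat.cast_one] at this
      have t1 := hub' u
      have t2 := hspine (catIdx e r u)
      have t3 : hamm (f (Sum.inl (catIdx e r u + 1))) (f v) ≤ 1 := by rw [← hJ]; exact hub v
      have t4 := hamm_triangle (f u) (f (Sum.inl (catIdx e r u))) (f v)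
      have t5 := hamm_triangle (f (Sum.inl (catIdx e r u))) (f (Sum.inl (catIdx e r u + 1))) (f v)
      omega
    · -- two blocks apart: u is a spine vertex
      have hu : u = Sum.inl (catIdx e r u) := catOff_max e r u hsm
      have hJ : catIdx e r v = catIdx e r u + 1 + 1 := by
        have := zmod_shift (catIdx e r u) (catIdx e r v) 2 (by omega)
        rw [this]
        push_cast
        ring
      have t1 := hspine (catIdx e r u)
      have t2 := hspine (catIdx e r u + 1)
      have t3 : hamm (f (Sum.inl (catIdx e r u + 1 + 1))) (f v) ≤ 1 := by rw [← hJ]; exact hub v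
      have t4 := hamm_triangle (f (Sum.inl (catIdx e r u))) (f (Sum.inl (catIdx e r u + 1))) (f v)
      have t5 := hamm_triangle (f (Sum.inl (catIdx e r u + 1))) (f (Sum.inl (catIdx e r u + 1 + 1))) (f v)
      rw [hu]
      omega
  -- conclude
  intro x y hmin
  have hx : f (F.symm x) = x := F.apply_symm_apply x
  have hy : f (F.symm y) = y := F.apply_symm_apply y
  have hgoal : hamm x y ≤ 3 := by
    rcases min_le_iff.mp hmin with hc | hc
    · rw [← hx, ← hy, hamm_comm]
      exact key (F.symm y) (F.symm x) hc
    · rw [← hx, ← hy]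
      exact key (F.symm x) (F.symm y) hc
  exact hgoal
end

section
/- Let m, n be positive integers with k+1 ≤ n, and let F be a {0,1}-valued m×n matrix arising as a rounding (consistent with all initial row and column sums, error < 1) of the matrix T with constant rows s_i/n where s_i ∈ {k, k+1} and k+1 ≤ n/2. Let N_i(d) denote the column of the d-th zero in row i (with wraparound across rows). Then for all rows r, s and integers d, e ≥ 0: N_r(d+e) - N_s(d) ≤ 2e + 4. -/
open scoped Classical

set_option maxHeartbeats 1000000

lemma sumF_eq (F : ℕ → ℕ → ℝ) (hF01 : ∀ i j, F i j = 0 ∨ F i j = 1) (i c : ℕ) :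
    ∑ j ∈ Finset.Icc 1 c, F i j
      = (c : ℝ) - ((Finset.Icc 1 c).filter (fun j => F i j = 0)).card := by
  have h1 : ∑ j ∈ Finset.Icc 1 c, F i j
      = ∑ j ∈ Finset.Icc 1 c, (1 - if F i j = 0 then (1:ℝ) else 0) := by
    refine Finset.sum_congr rfl fun j _ => ?_
    rcases hF01 i j with h | h <;> simp [h]
  rw [h1, Finset.sum_sub_distrib, Finset.sum_const, Finset.sum_boole]
  simp [Nat.card_Icc]

lemma arith (A B n d e a b : ℝ) (hA : n ≤ 2*A) (hB : n ≤ 2*B) (hA1 : 1 ≤ A) (hB1 : 1 ≤ B)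
    (hAn : A ≤ n) (hAB : A ≤ B + 1) (hBA : B ≤ A + 1)
    (hd : 1 ≤ d) (he : 0 ≤ e) (hdeA : d + e ≤ A)
    (key : (a-1)*A < (d+e)*n) (key2 : (d-1)*n < b*B) :
    a - b < 2*e + 5 := by
  have hA0 : 0 < A := by linarith
  have hB0 : 0 < B := by linarith
  have hn0 : (0:ℝ) < n := by linarith
  nlinarith [mul_lt_mul_of_pos_right key hB0, mul_lt_mul_of_pos_right key2 hA0,
    mul_pos hA0 hB0,
    mul_nonneg (mul_nonneg (by linarith : (0:ℝ) ≤ d) hn0.le) (by linarith : (0:ℝ) ≤ 1 - (B - A)),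
    mul_nonneg (mul_nonneg he hB0.le) (by linarith : (0:ℝ) ≤ 2*A - n),
    mul_nonneg hA0.le (by linarith : (0:ℝ) ≤ 2*B - n),
    mul_nonneg hn0.le (by linarith : (0:ℝ) ≤ A - d)]

/-- Corollary 4.5(c): for a {0,1}-valued rounding F (consistent with all initial row and
column sums, error < 1) of the matrix T with constant rows s_i/n, s_i ∈ {k, k+1},
k+1 ≤ n/2, letting N_i(d) be the column of the d-th zero of row i, the column of the
(d+e)-th zero of row r exceeds the column of the d-th zero of row s by at most 2e+4. -/
theorem stmt17 (m n k : ℕ) (hm : 0 < m) (hkn : 2 * (k + 1) ≤ n)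
    (s : ℕ → ℕ) (hs : ∀ i, 1 ≤ i → i ≤ m → s i = k ∨ s i = k + 1)
    (T F : ℕ → ℕ → ℝ)
    (hT : ∀ i j, 1 ≤ i → i ≤ m → 1 ≤ j → j ≤ n → T i j = (s i : ℝ) / (n : ℝ))
    (hF01 : ∀ i j, F i j = 0 ∨ F i j = 1)
    (hround : ∀ i j, F i j = (⌊T i j⌋ : ℝ) ∨ F i j = (⌈T i j⌉ : ℝ))
    (hrow : ∀ i, 1 ≤ i → i ≤ m → ∀ b : ℕ, 1 ≤ b → b ≤ n →
      |∑ j ∈ Finset.Icc 1 b, (T i j - F i j)| < 1)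
    (hcol : ∀ j, 1 ≤ j → j ≤ n → ∀ b : ℕ, 1 ≤ b → b ≤ m →
      |∑ i ∈ Finset.Icc 1 b, (T i j - F i j)| < 1)
    (N : ℕ → ℕ → ℕ)
    (hN : ∀ i d, 1 ≤ i → i ≤ m → 1 ≤ d → d ≤ n - s i →
      1 ≤ N i d ∧ N i d ≤ n ∧ F i (N i d) = 0 ∧
      ((Finset.Icc 1 (N i d)).filter (fun j => F i j = 0)).card = d)
    (r s' d e : ℕ) (hr1 : 1 ≤ r) (hrm : r ≤ m) (hs1 : 1 ≤ s') (hsm : s' ≤ m)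
    (hd : 1 ≤ d) (hde : d + e ≤ n - s r) (hd2 : d ≤ n - s s') :
    (N r (d + e) : ℤ) - (N s' d : ℤ) ≤ 2 * e + 4 := by
  obtain ⟨ha1, han, hFa, hcard_a⟩ :=
    hN r (d + e) hr1 hrm (le_trans hd (Nat.le_add_right d e)) hde
  obtain ⟨hb1, hbn, hFb, hcard_b⟩ := hN s' d hs1 hsm hd hd2
  set a := N r (d + e) with ha_def
  set b := N s' d with hb_def
  -- basic facts about s
  have hsr : s r = k ∨ s r = k + 1 := hs r hr1 hrm
  have hss : s s' = k ∨ s s' = k + 1 := hs s' hs1 hsm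
  have hsrn : s r + s r ≤ n := by omega
  have hssn : s s' + s s' ≤ n := by omega
  have hn0 : (0:ℝ) < n := by
    have : 0 < n := by omega
    exact_mod_cast this
  by_cases ha2 : a ≤ 1
  · omega
  push_neg at ha2
  -- zeros count up to a-1
  have hIcc : Finset.Icc 1 a = insert a (Finset.Icc 1 (a-1)) := by
    ext x
    simp only [Finset.mem_Icc, Finset.mem_insert]
    omega
  have hnotmem : a ∉ Finset.Icc 1 (a-1) := by simp [Finset.mem_Icc]; omega
  have hcard' : ((Finset.Icc 1 (a-1)).filter (fun j => F r j = 0)).card = d + e - 1 := by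
    rw [hIcc, Finset.filter_insert, if_pos hFa,
      Finset.card_insert_of_notMem (fun h => hnotmem (Finset.mem_of_mem_filter _ h))] at hcard_a
    omega
  -- sum of T over initial segments
  have hTsum : ∀ (i c : ℕ), 1 ≤ i → i ≤ m → c ≤ n →
      ∑ j ∈ Finset.Icc 1 c, T i j = (c : ℝ) * ((s i : ℝ) / n) := by
    intro i c hi1 him hcn
    have hconst : ∑ j ∈ Finset.Icc 1 c, T i j = ∑ _j ∈ Finset.Icc 1 c, ((s i : ℝ) / n) := by
      refine Finset.sum_congr rfl fun j hj => ?_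
      rw [Finset.mem_Icc] at hj
      exact hT i j hi1 him hj.1 (le_trans hj.2 hcn)
    rw [hconst, Finset.sum_const, Nat.card_Icc]
    simp [nsmul_eq_mul]
  -- key inequality for row r at a-1
  have hrowr := hrow r hr1 hrm (a-1) (by omega) (by omega)
  rw [Finset.sum_sub_distrib, hTsum r (a-1) hr1 hrm (by omega),
    sumF_eq F hF01 r (a-1), hcard'] at hrowr
  have hcast1 : ((a - 1 : ℕ) : ℝ) = (a : ℝ) - 1 := by
    push_cast [Nat.cast_sub (by omega : 1 ≤ a)]; ring
  have hcast2 : ((d + e - 1 : ℕ) : ℝ) = (d : ℝ) + e - 1 := by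
    push_cast [Nat.cast_sub (by omega : 1 ≤ d + e)]; ring
  rw [hcast1, hcast2] at hrowr
  have key : ((a:ℝ)-1) * ((n:ℝ) - s r) < ((d:ℝ)+e) * n := by
    have h := (abs_lt.mp hrowr).1
    have h2 : (((a:ℝ)-1) - ((d:ℝ)+e)) * n < ((a:ℝ)-1) * ((s r:ℝ)/n) * n := by
      apply mul_lt_mul_of_pos_right _ hn0
      linarith
    have h3 : ((a:ℝ)-1) * ((s r:ℝ)/n) * n = ((a:ℝ)-1) * s r := by
      field_simp
    nlinarith [h2, h3]
  -- key inequality for row s' at b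
  have hrows := hrow s' hs1 hsm b hb1 hbn
  rw [Finset.sum_sub_distrib, hTsum s' b hs1 hsm hbn, sumF_eq F hF01 s' b, hcard_b] at hrows
  have key2 : ((d:ℝ)-1) * n < (b:ℝ) * ((n:ℝ) - s s') := by
    have h := (abs_lt.mp hrows).2
    have h2 : (b:ℝ) * ((s s':ℝ)/n) * n < ((b:ℝ) - ((d:ℝ) - 1)) * n := by
      apply mul_lt_mul_of_pos_right _ hn0
      linarith
    have h3 : (b:ℝ) * ((s s':ℝ)/n) * n = (b:ℝ) * s s' := by
      field_simp
    nlinarith [h2, h3]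
  -- apply the arithmetic lemma
  have hsrR : (s r : ℝ) + s r ≤ n := by exact_mod_cast hsrn
  have hssR : (s s' : ℝ) + s s' ≤ n := by exact_mod_cast hssn
  have hsr1R : (s r : ℝ) + 1 ≤ n := by exact_mod_cast (by omega : s r + 1 ≤ n)
  have hss1R : (s s' : ℝ) + 1 ≤ n := by exact_mod_cast (by omega : s s' + 1 ≤ n)
  have hsr0R : (0:ℝ) ≤ s r := by positivity
  have hABR : (s s' : ℝ) ≤ (s r : ℝ) + 1 := by exact_mod_cast (by omega : s s' ≤ s r + 1)
  have hBAR : (s r : ℝ) ≤ (s s' : ℝ) + 1 := by exact_mod_cast (by omega : s r ≤ s s' + 1)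
  have hdR : (1:ℝ) ≤ d := by exact_mod_cast hd
  have heR : (0:ℝ) ≤ e := by positivity
  have hdeR : (d:ℝ) + e + s r ≤ n := by exact_mod_cast (by omega : d + e + s r ≤ n)
  have hfin : (a:ℝ) - b < 2*e + 5 :=
    arith ((n:ℝ) - s r) ((n:ℝ) - s s') n d e a b
      (by linarith) (by linarith) (by linarith) (by linarith) (by linarith)
      (by linarith) (by linarith) hdR heR (by linarith) key key2
  have hz : (a:ℤ) - b < 2*e + 5 := by exact_mod_cast hfin
  omega
end
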